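/- arXiv:2110.06720 — 5 statements merged into one kernel-verified Lean document; each statement's English description precedes it below -/
import Mathlib

section
/- For every complex Hadamard matrix H of size Q ≥ 1, the angle operator Θ_H fixes the identity matrix, Θ_H(I) = I, and its operator norm with respect to the Frobenius norm on M_Q(ℂ) is at most 1; consequently every eigenvalue of Θ_H lies in the interval [0, 1] and 1 is an eigenvalue of Θ_H. -/
open scoped BigOperators Matrix ComplexOrder

/-- The angle operator on 2-boxes associated to a complex Hadamard matrix `H`
(of size `Fintype.card n`):
`(Θ_H ξ)_{a,b} = Q⁻³ ∑_{c,d} |∑_m H_{m,c} conj(H_{m,d}) conj(H_{m,a}) H_{m,b}|² ξ_{c,d}`. -/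
noncomputable def angleOp {n : Type*} [Fintype n] (H : Matrix n n ℂ) :
    Matrix n n ℂ →ₗ[ℂ] Matrix n n ℂ where
  toFun ξ := Matrix.of fun a b =>
    (((Fintype.card n : ℂ)) ^ 3)⁻¹ *
      ∑ c, ∑ d,
        ((‖∑ m, H m c * (starRingEnd ℂ) (H m d) *
            (starRingEnd ℂ) (H m a) * H m b‖ ^ 2 : ℝ) : ℂ) * ξ c d
  map_add' ξ η := by
    ext a b
    simp [Matrix.add_apply, mul_add, Finset.sum_add_distrib]
  map_smul' r ξ := by
    ext a b
    simp [Matrix.smul_apply, smul_eq_mul, Finset.mul_sum, mul_comm, mul_assoc, mul_left_comm]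

/-- The Frobenius norm `‖x‖ = √(Tr(x* x)) = √(∑_{i,j} |x_{i,j}|²)` on matrices. -/
noncomputable def frobNorm {n : Type*} [Fintype n] (x : Matrix n n ℂ) : ℝ :=
  Real.sqrt (∑ i, ∑ j, ‖x i j‖ ^ 2)

lemma cast_sq_abs (z : ℂ) : ((‖z‖ ^ 2 : ℝ) : ℂ) = z * (starRingEnd ℂ) z := by
  rw [Complex.sq_norm, Complex.mul_conj]

lemma sum_swap4 {ι κ : Type*} [Fintype ι] [Fintype κ] {M : Type*} [AddCommMonoid M]
    (f : ι → ι → κ → κ → M) :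
    ∑ a, ∑ b, ∑ c, ∑ d, f a b c d = ∑ c, ∑ d, ∑ a, ∑ b, f a b c d := by
  have h1 : ∀ a : ι, ∑ b, ∑ c, ∑ d, f a b c d = ∑ c, ∑ d, ∑ b, f a b c d := by
    intro a
    rw [Finset.sum_comm]
    exact Finset.sum_congr rfl fun c _ => Finset.sum_comm
  calc ∑ a, ∑ b, ∑ c, ∑ d, f a b c d
      = ∑ a, ∑ c, ∑ d, ∑ b, f a b c d := Finset.sum_congr rfl fun a _ => h1 a
    _ = ∑ c, ∑ a, ∑ d, ∑ b, f a b c d := Finset.sum_comm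
    _ = ∑ c, ∑ d, ∑ a, ∑ b, f a b c d :=
        Finset.sum_congr rfl fun c _ => Finset.sum_comm

lemma sum_factor {ι κ : Type*} [Fintype ι] [Fintype κ] (u : ι → ℂ) (v : κ → ℂ) (C : ℂ) :
    (∑ c, u c) * (∑ d, v d) * C = ∑ c, ∑ d, u c * v d * C := by
  rw [Finset.sum_mul_sum, Finset.sum_mul]
  exact Finset.sum_congr rfl fun c _ => Finset.sum_mul _ _ _

noncomputable def Sbox {Q : ℕ} (H : Matrix (Fin Q) (Fin Q) ℂ) (a b c d : Fin Q) : ℂ :=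
  ∑ m, H m c * (starRingEnd ℂ) (H m d) * (starRingEnd ℂ) (H m a) * H m b

lemma angleOp_apply {Q : ℕ} (H : Matrix (Fin Q) (Fin Q) ℂ) (x : Matrix (Fin Q) (Fin Q) ℂ)
    (a b : Fin Q) :
    (angleOp H x) a b = (((Q : ℂ)) ^ 3)⁻¹ *
      ∑ c, ∑ d, ((‖Sbox H a b c d‖ ^ 2 : ℝ) : ℂ) * x c d := by
  simp [angleOp, Sbox, Fintype.card_fin]

-- expansion of |Sbox|² as a double sum
lemma sq_abs_Sbox {Q : ℕ} (H : Matrix (Fin Q) (Fin Q) ℂ) (a b c d : Fin Q) :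
    ((‖Sbox H a b c d‖ ^ 2 : ℝ) : ℂ) =
      ∑ m, ∑ m', (H m c * (starRingEnd ℂ) (H m d) * (starRingEnd ℂ) (H m a) * H m b) *
        ((starRingEnd ℂ) (H m' c) * H m' d * H m' a * (starRingEnd ℂ) (H m' b)) := by
  rw [cast_sq_abs, Sbox, map_sum, Finset.sum_mul_sum]
  exact Finset.sum_congr rfl fun m _ => Finset.sum_congr rfl fun m' _ => by
    simp [map_mul]

section Sums
variable {Q : ℕ} {H : Matrix (Fin Q) (Fin Q) ℂ}

lemma rowsum_c (huni : ∀ i j, H i j * (starRingEnd ℂ) (H i j) = 1)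
    (orth_row : ∀ m m', ∑ c, H m c * (starRingEnd ℂ) (H m' c)
      = if m = m' then (Q : ℂ) else 0) (a b : Fin Q) :
    ∑ c, ∑ d, ((‖Sbox H a b c d‖ ^ 2 : ℝ) : ℂ) = (Q : ℂ) ^ 3 := by
  simp only [sq_abs_Sbox]
  rw [sum_swap4]
  have e2 : ∀ m m' : Fin Q,
      (∑ c, ∑ d, (H m c * (starRingEnd ℂ) (H m d) * (starRingEnd ℂ) (H m a) * H m b) *
        ((starRingEnd ℂ) (H m' c) * H m' d * H m' a * (starRingEnd ℂ) (H m' b)))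
      = (if m = m' then (Q : ℂ) else 0) * (if m' = m then (Q : ℂ) else 0) *
        ((starRingEnd ℂ) (H m a) * H m b * H m' a * (starRingEnd ℂ) (H m' b)) := by
    intro m m'
    have hv : (∑ d, (starRingEnd ℂ) (H m d) * H m' d) = if m' = m then (Q : ℂ) else 0 := by
      rw [← orth_row m' m]
      exact Finset.sum_congr rfl fun d _ => mul_comm _ _
    rw [← orth_row m m', ← hv, sum_factor]
    exact Finset.sum_congr rfl fun c _ => Finset.sum_congr rfl fun d _ => by ring
  simp only [e2]
  have e3 : ∀ m : Fin Q, ∑ m', (if m = m' then (Q : ℂ) else 0) * (if m' = m then (Q : ℂ) else 0) *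
      ((starRingEnd ℂ) (H m a) * H m b * H m' a * (starRingEnd ℂ) (H m' b)) = (Q : ℂ) ^ 2 := by
    intro m
    rw [Finset.sum_eq_single m]
    · have h1 : (starRingEnd ℂ) (H m a) * H m b * H m a * (starRingEnd ℂ) (H m b) = 1 := by
        calc (starRingEnd ℂ) (H m a) * H m b * H m a * (starRingEnd ℂ) (H m b)
            = (H m a * (starRingEnd ℂ) (H m a)) * (H m b * (starRingEnd ℂ) (H m b)) := by ring
          _ = 1 := by rw [huni, huni, one_mul]
      simp [h1]
      ring
    · intro m' _ hne
      simp [hne, Ne.symm hne]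
    · simp
  simp only [e3]
  simp [Finset.sum_const, Fintype.card_fin]
  ring

lemma colsum_c (huni : ∀ i j, H i j * (starRingEnd ℂ) (H i j) = 1)
    (orth_row : ∀ m m', ∑ c, H m c * (starRingEnd ℂ) (H m' c)
      = if m = m' then (Q : ℂ) else 0) (c d : Fin Q) :
    ∑ a, ∑ b, ((‖Sbox H a b c d‖ ^ 2 : ℝ) : ℂ) = (Q : ℂ) ^ 3 := by
  simp only [sq_abs_Sbox]
  have swap : ∀ a : Fin Q, ∀ b : Fin Q,
      (∑ m, ∑ m', (H m c * (starRingEnd ℂ) (H m d) * (starRingEnd ℂ) (H m a) * H m b) *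
        ((starRingEnd ℂ) (H m' c) * H m' d * H m' a * (starRingEnd ℂ) (H m' b))) =
      ∑ m, ∑ m', (fun a b m m' =>
        (H m c * (starRingEnd ℂ) (H m d) * (starRingEnd ℂ) (H m a) * H m b) *
        ((starRingEnd ℂ) (H m' c) * H m' d * H m' a * (starRingEnd ℂ) (H m' b))) a b m m' :=
    fun a b => rfl
  rw [show (∑ a, ∑ b, ∑ m, ∑ m',
      (H m c * (starRingEnd ℂ) (H m d) * (starRingEnd ℂ) (H m a) * H m b) *
        ((starRingEnd ℂ) (H m' c) * H m' d * H m' a * (starRingEnd ℂ) (H m' b)))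
    = ∑ m, ∑ m', ∑ a, ∑ b,
      (H m c * (starRingEnd ℂ) (H m d) * (starRingEnd ℂ) (H m a) * H m b) *
        ((starRingEnd ℂ) (H m' c) * H m' d * H m' a * (starRingEnd ℂ) (H m' b)) from
    sum_swap4 _]
  have e2 : ∀ m m' : Fin Q,
      (∑ a, ∑ b, (H m c * (starRingEnd ℂ) (H m d) * (starRingEnd ℂ) (H m a) * H m b) *
        ((starRingEnd ℂ) (H m' c) * H m' d * H m' a * (starRingEnd ℂ) (H m' b)))
      = (if m' = m then (Q : ℂ) else 0) * (if m = m' then (Q : ℂ) else 0) *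
        (H m c * (starRingEnd ℂ) (H m d) * (starRingEnd ℂ) (H m' c) * H m' d) := by
    intro m m'
    have hu : (∑ a, (starRingEnd ℂ) (H m a) * H m' a) = if m' = m then (Q : ℂ) else 0 := by
      rw [← orth_row m' m]
      exact Finset.sum_congr rfl fun a _ => mul_comm _ _
    rw [← orth_row m m', ← hu, sum_factor]
    exact Finset.sum_congr rfl fun a _ => Finset.sum_congr rfl fun b _ => by ring
  simp only [e2]
  have e3 : ∀ m : Fin Q, ∑ m', (if m' = m then (Q : ℂ) else 0) * (if m = m' then (Q : ℂ) else 0) *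
      (H m c * (starRingEnd ℂ) (H m d) * (starRingEnd ℂ) (H m' c) * H m' d) = (Q : ℂ) ^ 2 := by
    intro m
    rw [Finset.sum_eq_single m]
    · have h1 : H m c * (starRingEnd ℂ) (H m d) * (starRingEnd ℂ) (H m c) * H m d = 1 := by
        calc H m c * (starRingEnd ℂ) (H m d) * (starRingEnd ℂ) (H m c) * H m d
            = (H m c * (starRingEnd ℂ) (H m c)) * (H m d * (starRingEnd ℂ) (H m d)) := by ring
          _ = 1 := by rw [huni, huni, one_mul]
      simp [h1]
      ring
    · intro m' _ hne
      simp [hne, Ne.symm hne]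
    · simp
  simp only [e3]
  simp [Finset.sum_const, Fintype.card_fin]
  ring

end Sums

/-- The "square root" matrix of the kernel of `angleOp`. -/
noncomputable def Bmat {Q : ℕ} (H : Matrix (Fin Q) (Fin Q) ℂ) :
    Matrix (Fin Q × Fin Q) (Fin Q × Fin Q) ℂ :=
  Matrix.of fun p q => (((Real.sqrt ((Q : ℝ) ^ 3))⁻¹ : ℝ) : ℂ) *
    (H p.1 q.1 * (starRingEnd ℂ) (H p.1 q.2) * (starRingEnd ℂ) (H p.2 q.1) * H p.2 q.2)

lemma Bmat_entry {Q : ℕ} (hQ : 1 ≤ Q) (H : Matrix (Fin Q) (Fin Q) ℂ) (a b c d : Fin Q) :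
    ((Bmat H)ᴴ * Bmat H) (a, b) (c, d) =
      (((Q : ℂ)) ^ 3)⁻¹ * ((‖Sbox H a b c d‖ ^ 2 : ℝ) : ℂ) := by
  have hQ3 : (0 : ℝ) ≤ (Q : ℝ) ^ 3 := by positivity
  have hk : ((((Real.sqrt ((Q : ℝ) ^ 3))⁻¹ : ℝ) : ℂ)) * ((((Real.sqrt ((Q : ℝ) ^ 3))⁻¹ : ℝ) : ℂ))
      = (((Q : ℂ)) ^ 3)⁻¹ := by
    rw [← Complex.ofReal_mul, ← mul_inv, Real.mul_self_sqrt hQ3]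
    push_cast
    ring
  rw [Matrix.mul_apply, sq_abs_Sbox]
  rw [Fintype.sum_prod_type]
  rw [Finset.mul_sum]
  refine Finset.sum_congr rfl fun m _ => ?_
  rw [Finset.mul_sum]
  refine Finset.sum_congr rfl fun m' _ => ?_
  simp only [Matrix.conjTranspose_apply, Bmat, Matrix.of_apply, RCLike.star_def, map_mul,
    Complex.conj_conj, Complex.conj_ofReal]
  rw [← hk]
  ring

lemma Bmat_mulVec {Q : ℕ} (hQ : 1 ≤ Q) (H : Matrix (Fin Q) (Fin Q) ℂ)
    (x : Matrix (Fin Q) (Fin Q) ℂ) (a b : Fin Q) :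
    (((Bmat H)ᴴ * Bmat H) *ᵥ (fun p => x p.1 p.2)) (a, b) = (angleOp H x) a b := by
  rw [Matrix.mulVec, dotProduct, angleOp_apply, Finset.mul_sum, Fintype.sum_prod_type]
  refine Finset.sum_congr rfl fun c _ => ?_
  rw [Finset.mul_sum]
  refine Finset.sum_congr rfl fun d _ => ?_
  rw [Bmat_entry hQ]
  ring

/-- For every complex Hadamard matrix `H` of size `Q ≥ 1`, the angle operator fixes the
identity matrix, its operator norm with respect to the Frobenius norm is at most `1`;
consequently every eigenvalue of `Θ_H` lies in `[0, 1]`, and `1` is an eigenvalue of `Θ_H`. -/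
theorem angleOp_fixes_one_norm_le_one_eigenvalues
    (Q : ℕ) (hQ : 1 ≤ Q) (H : Matrix (Fin Q) (Fin Q) ℂ)
    (h_unimodular : ∀ i j, ‖H i j‖ = 1)
    (h_hadamard : H * Hᴴ = (Q : ℂ) • (1 : Matrix (Fin Q) (Fin Q) ℂ)) :
    angleOp H (1 : Matrix (Fin Q) (Fin Q) ℂ) = 1 ∧
    (∀ x : Matrix (Fin Q) (Fin Q) ℂ, frobNorm (angleOp H x) ≤ frobNorm x) ∧
    (∀ μ : ℂ, Module.End.HasEigenvalue
        (angleOp H : Module.End ℂ (Matrix (Fin Q) (Fin Q) ℂ)) μ →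
      μ ∈ Set.Icc (0 : ℂ) 1) ∧
    Module.End.HasEigenvalue (angleOp H : Module.End ℂ (Matrix (Fin Q) (Fin Q) ℂ)) 1 := by
  have hQ0 : (Q : ℂ) ≠ 0 := Nat.cast_ne_zero.mpr (by omega)
  have hQ3R : (0 : ℝ) < (Q : ℝ) ^ 3 := by positivity
  have huni : ∀ i j, H i j * (starRingEnd ℂ) (H i j) = 1 := by
    intro i j
    rw [Complex.mul_conj, Complex.normSq_eq_norm_sq, h_unimodular, one_pow, Complex.ofReal_one]
  have orth_row : ∀ m m', ∑ c, H m c * (starRingEnd ℂ) (H m' c)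
      = if m = m' then (Q : ℂ) else 0 := by
    intro m m'
    have := congrFun (congrFun h_hadamard m) m'
    simp only [Matrix.mul_apply, Matrix.conjTranspose_apply, Matrix.smul_apply,
      Matrix.one_apply, smul_eq_mul, RCLike.star_def] at this
    rw [this]
    split <;> simp
  have hHc : Hᴴ * H = (Q : ℂ) • (1 : Matrix (Fin Q) (Fin Q) ℂ) := by
    have h1 : H * ((Q : ℂ)⁻¹ • Hᴴ) = 1 := by
      rw [Matrix.mul_smul, h_hadamard, smul_smul, inv_mul_cancel₀ hQ0, one_smul]
    have h2 : ((Q : ℂ)⁻¹ • Hᴴ) * H = 1 := mul_eq_one_comm.mp h1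
    calc Hᴴ * H = (Q : ℂ) • (((Q : ℂ)⁻¹ • Hᴴ) * H) := by
          rw [Matrix.smul_mul, smul_smul, mul_inv_cancel₀ hQ0, one_smul]
      _ = (Q : ℂ) • 1 := by rw [h2]
  have orth_col : ∀ a b, ∑ m, (starRingEnd ℂ) (H m a) * H m b
      = if a = b then (Q : ℂ) else 0 := by
    intro a b
    have := congrFun (congrFun hHc a) b
    simp only [Matrix.mul_apply, Matrix.conjTranspose_apply, Matrix.smul_apply,
      Matrix.one_apply, smul_eq_mul, RCLike.star_def] at this
    rw [this]
    split <;> simp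
  -- Part 1 : angleOp H 1 = 1
  have part1 : angleOp H (1 : Matrix (Fin Q) (Fin Q) ℂ) = 1 := by
    ext a b
    rw [angleOp_apply]
    simp only [Matrix.one_apply, mul_ite, mul_one, mul_zero, Finset.sum_ite_eq,
      Finset.mem_univ, if_true]
    have hc : ∀ c : Fin Q, Sbox H a b c c = if a = b then (Q : ℂ) else 0 := by
      intro c
      rw [Sbox, ← orth_col a b]
      refine Finset.sum_congr rfl fun m _ => ?_
      calc H m c * (starRingEnd ℂ) (H m c) * (starRingEnd ℂ) (H m a) * H m b
          = (H m c * (starRingEnd ℂ) (H m c)) * ((starRingEnd ℂ) (H m a) * H m b) := by ring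
        _ = (starRingEnd ℂ) (H m a) * H m b := by rw [huni, one_mul]
    simp only [hc]
    by_cases hab : a = b
    · subst hab
      simp only [if_pos rfl, Matrix.one_apply_eq, Complex.norm_natCast]
      rw [Finset.sum_const, Finset.card_univ, Fintype.card_fin]
      push_cast
      simp only [Complex.norm_natCast, Real.norm_natCast, Complex.ofReal_natCast]
      field_simp
      ring
    · simp [hab]
  -- real row/col sums
  have rowsumR : ∀ a b, ∑ c, ∑ d, ‖Sbox H a b c d‖ ^ 2 = (Q : ℝ) ^ 3 := by
    intro a b
    exact_mod_cast rowsum_c huni orth_row a b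
  have colsumR : ∀ c d, ∑ a, ∑ b, ‖Sbox H a b c d‖ ^ 2 = (Q : ℝ) ^ 3 := by
    intro c d
    exact_mod_cast colsum_c huni orth_row c d
  -- Part 2 : contraction
  have part2 : ∀ x : Matrix (Fin Q) (Fin Q) ℂ, frobNorm (angleOp H x) ≤ frobNorm x := by
    intro x
    rw [frobNorm, frobNorm]
    apply Real.sqrt_le_sqrt
    have hpt : ∀ a b : Fin Q, ‖(angleOp H x) a b‖ ^ 2 ≤
        ((Q : ℝ) ^ 3)⁻¹ * ∑ c, ∑ d,
          ‖Sbox H a b c d‖ ^ 2 * ‖x c d‖ ^ 2 := by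
      intro a b
      have h1 : ‖(angleOp H x) a b‖ ≤
          ((Q : ℝ) ^ 3)⁻¹ * ∑ c, ∑ d,
            ‖Sbox H a b c d‖ ^ 2 * ‖x c d‖ := by
        rw [angleOp_apply, norm_mul]
        have habs1 : ‖(((Q : ℂ)) ^ 3)⁻¹‖ = ((Q : ℝ) ^ 3)⁻¹ := by
          rw [norm_inv, norm_pow, Complex.norm_natCast]
        rw [habs1]
        refine mul_le_mul_of_nonneg_left ?_ (by positivity)
        calc ‖∑ c, ∑ d, ((‖Sbox H a b c d‖ ^ 2 : ℝ) : ℂ) * x c d‖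
            ≤ ∑ c, ‖∑ d, ((‖Sbox H a b c d‖ ^ 2 : ℝ) : ℂ) * x c d‖ :=
              norm_sum_le _ _
          _ ≤ ∑ c, ∑ d, ‖((‖Sbox H a b c d‖ ^ 2 : ℝ) : ℂ) * x c d‖ :=
              Finset.sum_le_sum fun c _ => norm_sum_le _ _
          _ = ∑ c, ∑ d, ‖Sbox H a b c d‖ ^ 2 * ‖x c d‖ := by
              refine Finset.sum_congr rfl fun c _ => Finset.sum_congr rfl fun d _ => ?_
              rw [norm_mul, Complex.norm_real, Real.norm_of_nonneg (by positivity)]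
      have h2 := pow_le_pow_left₀ (norm_nonneg _) h1 2
      refine h2.trans ?_
      rw [mul_pow]
      have cs : (∑ c, ∑ d, ‖Sbox H a b c d‖ ^ 2 * ‖x c d‖) ^ 2
          ≤ (∑ c, ∑ d, ‖Sbox H a b c d‖ ^ 2) *
            (∑ c, ∑ d, ‖Sbox H a b c d‖ ^ 2 * ‖x c d‖ ^ 2) := by
        have h := Finset.sum_mul_sq_le_sq_mul_sq Finset.univ
          (fun p : Fin Q × Fin Q => Real.sqrt (‖Sbox H a b p.1 p.2‖ ^ 2))
          (fun p : Fin Q × Fin Q =>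
            Real.sqrt (‖Sbox H a b p.1 p.2‖ ^ 2) * ‖x p.1 p.2‖)
        have e1 : ∀ p : Fin Q × Fin Q,
            Real.sqrt (‖Sbox H a b p.1 p.2‖ ^ 2) *
              (Real.sqrt (‖Sbox H a b p.1 p.2‖ ^ 2) * ‖x p.1 p.2‖)
            = ‖Sbox H a b p.1 p.2‖ ^ 2 * ‖x p.1 p.2‖ := by
          intro p
          rw [← mul_assoc, Real.mul_self_sqrt (by positivity)]
        have e2 : ∀ p : Fin Q × Fin Q,
            Real.sqrt (‖Sbox H a b p.1 p.2‖ ^ 2) ^ 2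
              = ‖Sbox H a b p.1 p.2‖ ^ 2 :=
          fun p => Real.sq_sqrt (by positivity)
        have e3 : ∀ p : Fin Q × Fin Q,
            (Real.sqrt (‖Sbox H a b p.1 p.2‖ ^ 2) * ‖x p.1 p.2‖) ^ 2
              = ‖Sbox H a b p.1 p.2‖ ^ 2 * ‖x p.1 p.2‖ ^ 2 := by
          intro p
          rw [mul_pow, Real.sq_sqrt (by positivity)]
        simp only [e1, e2, e3] at h
        calc (∑ c, ∑ d, ‖Sbox H a b c d‖ ^ 2 * ‖x c d‖) ^ 2
            = (∑ p : Fin Q × Fin Q,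
                ‖Sbox H a b p.1 p.2‖ ^ 2 * ‖x p.1 p.2‖) ^ 2 := by
              rw [Fintype.sum_prod_type]
          _ ≤ (∑ p : Fin Q × Fin Q, ‖Sbox H a b p.1 p.2‖ ^ 2) *
              (∑ p : Fin Q × Fin Q,
                ‖Sbox H a b p.1 p.2‖ ^ 2 * ‖x p.1 p.2‖ ^ 2) := h
          _ = (∑ c, ∑ d, ‖Sbox H a b c d‖ ^ 2) *
              (∑ c, ∑ d, ‖Sbox H a b c d‖ ^ 2 * ‖x c d‖ ^ 2) := by
              rw [Fintype.sum_prod_type, Fintype.sum_prod_type]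
      calc (((Q : ℝ) ^ 3)⁻¹) ^ 2 *
            (∑ c, ∑ d, ‖Sbox H a b c d‖ ^ 2 * ‖x c d‖) ^ 2
          ≤ (((Q : ℝ) ^ 3)⁻¹) ^ 2 * ((∑ c, ∑ d, ‖Sbox H a b c d‖ ^ 2) *
              (∑ c, ∑ d, ‖Sbox H a b c d‖ ^ 2 * ‖x c d‖ ^ 2)) :=
            mul_le_mul_of_nonneg_left cs (by positivity)
        _ = (((Q : ℝ) ^ 3)⁻¹) ^ 2 * ((Q : ℝ) ^ 3 *
              (∑ c, ∑ d, ‖Sbox H a b c d‖ ^ 2 * ‖x c d‖ ^ 2)) := by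
            rw [rowsumR]
        _ = ((Q : ℝ) ^ 3)⁻¹ *
              ∑ c, ∑ d, ‖Sbox H a b c d‖ ^ 2 * ‖x c d‖ ^ 2 := by
            field_simp
    calc ∑ a, ∑ b, ‖(angleOp H x) a b‖ ^ 2
        ≤ ∑ a, ∑ b, ((Q : ℝ) ^ 3)⁻¹ * ∑ c, ∑ d,
            ‖Sbox H a b c d‖ ^ 2 * ‖x c d‖ ^ 2 :=
          Finset.sum_le_sum fun a _ => Finset.sum_le_sum fun b _ => hpt a b
      _ = ((Q : ℝ) ^ 3)⁻¹ * ∑ a, ∑ b, ∑ c, ∑ d,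
            ‖Sbox H a b c d‖ ^ 2 * ‖x c d‖ ^ 2 := by
          rw [Finset.mul_sum]
          exact Finset.sum_congr rfl fun a _ => (Finset.mul_sum _ _ _).symm
      _ = ((Q : ℝ) ^ 3)⁻¹ * ∑ c, ∑ d, ∑ a, ∑ b,
            ‖Sbox H a b c d‖ ^ 2 * ‖x c d‖ ^ 2 := by
          rw [sum_swap4]
      _ = ((Q : ℝ) ^ 3)⁻¹ * ∑ c, ∑ d,
            (∑ a, ∑ b, ‖Sbox H a b c d‖ ^ 2) * ‖x c d‖ ^ 2 := by
          congr 1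
          refine Finset.sum_congr rfl fun c _ => Finset.sum_congr rfl fun d _ => ?_
          rw [Finset.sum_mul]
          exact Finset.sum_congr rfl fun a _ => (Finset.sum_mul _ _ _).symm
      _ = ∑ c, ∑ d, ‖x c d‖ ^ 2 := by
          simp only [colsumR]
          have : ∀ c : Fin Q, ∑ d, (Q : ℝ) ^ 3 * ‖x c d‖ ^ 2
              = (Q : ℝ) ^ 3 * ∑ d, ‖x c d‖ ^ 2 :=
            fun c => (Finset.mul_sum _ _ _).symm
          simp only [this]
          rw [← Finset.mul_sum, ← mul_assoc, inv_mul_cancel₀ (ne_of_gt hQ3R), one_mul]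
  refine ⟨part1, part2, ?_, ?_⟩
  · -- eigenvalues in [0,1]
    intro μ hμ
    obtain ⟨x, hx⟩ := hμ.exists_hasEigenvector
    have hxe : angleOp H x = μ • x := Module.End.mem_eigenspace_iff.mp hx.1
    have hx0 : x ≠ 0 := hx.2
    obtain ⟨a₀, b₀, hab⟩ : ∃ a b, x a b ≠ 0 := by
      by_contra h
      push_neg at h
      exact hx0 (by ext a b; simpa using h a b)
    set y : Fin Q × Fin Q → ℂ := fun p => x p.1 p.2 with hy
    have hMv : ((Bmat H)ᴴ * Bmat H) *ᵥ y = μ • y := by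
      funext p
      obtain ⟨a, b⟩ := p
      rw [show (((Bmat H)ᴴ * Bmat H) *ᵥ y) (a, b) = (angleOp H x) a b from
        Bmat_mulVec hQ H x a b, hxe]
      simp [hy, Matrix.smul_apply, smul_eq_mul]
    have hpsd := (Matrix.posSemidef_conjTranspose_mul_self (Bmat H)).dotProduct_mulVec_nonneg y
    rw [hMv] at hpsd
    have hr : (star y) ⬝ᵥ y = ((∑ p : Fin Q × Fin Q, Complex.normSq (y p) : ℝ) : ℂ) := by
      push_cast
      rw [dotProduct]
      refine Finset.sum_congr rfl fun p _ => ?_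
      rw [Pi.star_apply, RCLike.star_def, mul_comm, Complex.mul_conj]
    set r : ℝ := ∑ p : Fin Q × Fin Q, Complex.normSq (y p) with hrdef
    have hrpos : 0 < r :=
      Finset.sum_pos' (fun p _ => Complex.normSq_nonneg _)
        ⟨(a₀, b₀), Finset.mem_univ _, Complex.normSq_pos.mpr hab⟩
    have hle : (0 : ℂ) ≤ μ * (r : ℂ) := by
      calc (0 : ℂ) ≤ star y ⬝ᵥ (μ • y) := hpsd
        _ = μ * (star y ⬝ᵥ y) := by
            rw [dotProduct_smul]
            simp [smul_eq_mul]
        _ = μ * (r : ℂ) := by rw [hr]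
    rw [Complex.le_def] at hle
    have him : μ.im = 0 := by
      have h := hle.2
      simp only [Complex.zero_im, Complex.mul_im, Complex.ofReal_re, Complex.ofReal_im,
        mul_zero, add_zero, zero_add] at h
      rcases mul_eq_zero.mp h.symm with h | h
      · exact h
      · exact absurd h (ne_of_gt hrpos)
    have hre0 : 0 ≤ μ.re := by
      have h := hle.1
      simp only [Complex.zero_re, Complex.mul_re, Complex.ofReal_re, Complex.ofReal_im,
        mul_zero, sub_zero] at h
      nlinarith
    have hfp : 0 < frobNorm x := by
      rw [frobNorm]
      apply Real.sqrt_pos.mpr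
      refine Finset.sum_pos' (fun i _ => Finset.sum_nonneg fun j _ => sq_nonneg _)
        ⟨a₀, Finset.mem_univ _, Finset.sum_pos' (fun j _ => sq_nonneg _)
          ⟨b₀, Finset.mem_univ _, pow_pos (norm_pos_iff.mpr hab) 2⟩⟩
    have habsμ : ‖μ‖ ≤ 1 := by
      have h1 : frobNorm (angleOp H x) = ‖μ‖ * frobNorm x := by
        rw [hxe, frobNorm, frobNorm]
        have e : ∀ i j, ‖(μ • x) i j‖ ^ 2
            = ‖μ‖ ^ 2 * ‖x i j‖ ^ 2 := by
          intro i j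
          simp [Matrix.smul_apply, smul_eq_mul, map_mul, mul_pow]
        simp only [e]
        have : ∀ i : Fin Q, ∑ j, ‖μ‖ ^ 2 * ‖x i j‖ ^ 2
            = ‖μ‖ ^ 2 * ∑ j, ‖x i j‖ ^ 2 :=
          fun i => (Finset.mul_sum _ _ _).symm
        simp only [this]
        rw [← Finset.mul_sum, Real.sqrt_mul (sq_nonneg _), Real.sqrt_sq (norm_nonneg _)]
      have h2 := part2 x
      rw [h1] at h2
      have h3 : ‖μ‖ * frobNorm x ≤ 1 * frobNorm x := by rwa [one_mul]
      exact le_of_mul_le_mul_right h3 hfp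
    have hre1 : μ.re ≤ 1 :=
      le_trans (le_trans (le_abs_self _) (Complex.abs_re_le_norm μ)) habsμ
    exact ⟨by rw [Complex.le_def]; exact ⟨by simpa using hre0, by simp [him]⟩,
      by rw [Complex.le_def]; exact ⟨by simpa using hre1, by simp [him]⟩⟩
  · -- 1 is an eigenvalue
    have hone0 : (1 : Matrix (Fin Q) (Fin Q) ℂ) ≠ 0 := by
      intro h
      have := congrFun (congrFun h ⟨0, hQ⟩) ⟨0, hQ⟩
      simp [Matrix.one_apply] at this
    exact Module.End.hasEigenvalue_of_hasEigenvector
      ⟨Module.End.mem_eigenspace_iff.mpr (by rw [part1, one_smul]), hone0⟩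
end

section
/- For every complex Hadamard matrix H of size Q ≥ 1, the fixed-point set {x ∈ M_Q(ℂ) : Θ_H x = x} of the angle operator is a commutative unital *-subalgebra of M_Q(ℂ): it contains the identity matrix, is closed under addition, scalar multiplication, matrix multiplication and the conjugate transpose, and any two of its elements commute. -/
open scoped BigOperators Matrix

namespace AngleAux
open Complex Finset

local notation "𝕔" => starRingEnd ℂ

variable {Q : ℕ}

/-- The (unnormalized) kernel entry `S_{ab,cd} = ∑_m H_{mc} conj(H_{md}) conj(H_{ma}) H_{mb}`. -/
noncomputable def Sk (H : Matrix (Fin Q) (Fin Q) ℂ) (a b c d : Fin Q) : ℂ :=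
  ∑ m, H m c * 𝕔 (H m d) * 𝕔 (H m a) * H m b

/-- `x` is locally constant along the support of the kernel. -/
def LC (H x : Matrix (Fin Q) (Fin Q) ℂ) : Prop :=
  ∀ a b c d, Sk H a b c d ≠ 0 → x a b = x c d

/-- `Y` is an operator with eigenvalue `x c d` on the vector
`v_{cd} = (H m c * conj (H m d))_m`. -/
def Wit (H Y x : Matrix (Fin Q) (Fin Q) ℂ) : Prop :=
  ∀ c d m, (∑ n, Y m n * (H n c * 𝕔 (H n d))) = x c d * (H m c * 𝕔 (H m d))

lemma Sk_conj (H : Matrix (Fin Q) (Fin Q) ℂ) (a b c d : Fin Q) :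
    𝕔 (Sk H a b c d) = Sk H c d a b := by
  simp only [Sk, map_sum, map_mul, Complex.conj_conj]
  exact Finset.sum_congr rfl fun m _ => by ring

lemma Sk_swap (H : Matrix (Fin Q) (Fin Q) ℂ) (a b c d : Fin Q) :
    Sk H b a d c = 𝕔 (Sk H a b c d) := by
  simp only [Sk, map_sum, map_mul, Complex.conj_conj]
  exact Finset.sum_congr rfl fun m _ => by ring

lemma sum_swap4 {α : Type*} [AddCommMonoid α] (f : Fin Q → Fin Q → Fin Q → Fin Q → α) :
    ∑ c, ∑ d, ∑ m, ∑ n, f c d m n = ∑ m, ∑ n, ∑ c, ∑ d, f c d m n := by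
  calc ∑ c, ∑ d, ∑ m, ∑ n, f c d m n
      = ∑ c, ∑ m, ∑ d, ∑ n, f c d m n :=
        Finset.sum_congr rfl fun c _ => Finset.sum_comm
    _ = ∑ m, ∑ c, ∑ d, ∑ n, f c d m n := Finset.sum_comm
    _ = ∑ m, ∑ c, ∑ n, ∑ d, f c d m n :=
        Finset.sum_congr rfl fun m _ => Finset.sum_congr rfl fun c _ => Finset.sum_comm
    _ = ∑ m, ∑ n, ∑ c, ∑ d, f c d m n :=
        Finset.sum_congr rfl fun m _ => Finset.sum_comm

section Main

variable {H : Matrix (Fin Q) (Fin Q) ℂ}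
variable (hU : ∀ i j, H i j * 𝕔 (H i j) = 1)
variable (hrow : ∀ p q, (∑ b, H p b * 𝕔 (H q b)) = if p = q then (Q:ℂ) else 0)
variable (hcol : ∀ b c, (∑ p, H p b * 𝕔 (H p c)) = if b = c then (Q:ℂ) else 0)

include hrow in
lemma hrowc : ∀ p q, (∑ b, 𝕔 (H p b) * H q b) = if p = q then (Q:ℂ) else 0 := by
  intro p q
  have : (∑ b, 𝕔 (H p b) * H q b) = 𝕔 (∑ b, H p b * 𝕔 (H q b)) := by
    rw [map_sum]
    exact Finset.sum_congr rfl fun b _ => by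
      rw [map_mul, Complex.conj_conj, mul_comm]
  rw [this, hrow]
  split <;> simp

include hcol in
lemma hcolc : ∀ b c, (∑ p, 𝕔 (H p b) * H p c) = if b = c then (Q:ℂ) else 0 := by
  intro b c
  have : (∑ p, 𝕔 (H p b) * H p c) = 𝕔 (∑ p, H p b * 𝕔 (H p c)) := by
    rw [map_sum]
    exact Finset.sum_congr rfl fun p _ => by
      rw [map_mul, Complex.conj_conj, mul_comm]
  rw [this, hcol]
  split <;> simp

include hU hrow in
lemma rowsum (a b : Fin Q) :
    ∑ c, ∑ d, (normSq (Sk H a b c d) : ℂ) = (Q:ℂ)^3 := by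
  have key : ∀ c d, (normSq (Sk H a b c d) : ℂ)
      = ∑ m, ∑ n, (H m c * 𝕔 (H n c)) *
          ((𝕔 (H m d) * H n d) * (𝕔 (H m a) * H m b * H n a * 𝕔 (H n b))) := by
    intro c d
    rw [← Complex.mul_conj (Sk H a b c d)]
    show Sk H a b c d * 𝕔 (Sk H a b c d) = _
    unfold Sk
    rw [map_sum, Finset.sum_mul_sum]
    refine Finset.sum_congr rfl fun m _ => Finset.sum_congr rfl fun n _ => ?_
    simp only [map_mul, Complex.conj_conj]
    ring
  calc ∑ c, ∑ d, (normSq (Sk H a b c d) : ℂ)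
      = ∑ m, ∑ n, ∑ c, ∑ d, (H m c * 𝕔 (H n c)) *
          ((𝕔 (H m d) * H n d) * (𝕔 (H m a) * H m b * H n a * 𝕔 (H n b))) := by
        simp_rw [key]; exact sum_swap4 _
    _ = ∑ m, ∑ n, (∑ c, H m c * 𝕔 (H n c)) *
          ((∑ d, 𝕔 (H m d) * H n d) * (𝕔 (H m a) * H m b * H n a * 𝕔 (H n b))) := by
        refine Finset.sum_congr rfl fun m _ => Finset.sum_congr rfl fun n _ => ?_
        rw [Finset.sum_mul]
        refine Finset.sum_congr rfl fun c _ => ?_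
        rw [← Finset.mul_sum, Finset.sum_mul]
    _ = ∑ m, ∑ n, (if m = n then (Q:ℂ) else 0) *
          ((if m = n then (Q:ℂ) else 0) * (𝕔 (H m a) * H m b * H n a * 𝕔 (H n b))) := by
        refine Finset.sum_congr rfl fun m _ => Finset.sum_congr rfl fun n _ => ?_
        rw [hrow, hrowc hrow]
    _ = ∑ m, (Q:ℂ) * ((Q:ℂ) * (𝕔 (H m a) * H m b * H m a * 𝕔 (H m b))) := by
        refine Finset.sum_congr rfl fun m _ => ?_
        simp [Finset.sum_ite_eq, ite_mul, zero_mul]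
    _ = (Q:ℂ)^3 := by
        have h1 : ∀ m : Fin Q, 𝕔 (H m a) * H m b * H m a * 𝕔 (H m b) = 1 := by
          intro m
          calc 𝕔 (H m a) * H m b * H m a * 𝕔 (H m b)
              = (H m a * 𝕔 (H m a)) * (H m b * 𝕔 (H m b)) := by ring
            _ = 1 := by rw [hU, hU, one_mul]
        simp only [h1, mul_one, Finset.sum_const, Finset.card_univ, Fintype.card_fin,
          nsmul_eq_mul]
        ring

/-- Unfolding the fixed point equation. -/
lemma fix_iff (hQ0 : (Q:ℂ) ≠ 0) (x : Matrix (Fin Q) (Fin Q) ℂ) :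
    angleOp H x = x ↔
      ∀ a b, ∑ c, ∑ d, (normSq (Sk H a b c d) : ℂ) * x c d = (Q:ℂ)^3 * x a b := by
  have happ : ∀ a b : Fin Q, (angleOp H x) a b
      = ((Q:ℂ)^3)⁻¹ * ∑ c, ∑ d, (normSq (Sk H a b c d) : ℂ) * x c d := by
    intro a b
    simp only [angleOp, LinearMap.coe_mk, AddHom.coe_mk, Matrix.of_apply,
      Fintype.card_fin, Complex.sq_norm, Sk]
  have hQ3 : ((Q:ℂ)^3) ≠ 0 := pow_ne_zero _ hQ0
  constructor
  · intro hfix a b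
    have := happ a b
    rw [hfix] at this
    field_simp at this
    linear_combination -this
  · intro h
    ext a b
    rw [happ a b, h a b]
    field_simp

include hU hrow in
lemma fix_to_LC (hQ0 : (Q:ℂ) ≠ 0) {x : Matrix (Fin Q) (Fin Q) ℂ}
    (hfix : angleOp H x = x) : LC H x := by
  classical
  have hrsC : ∀ a b : Fin Q, ∑ c, ∑ d, (normSq (Sk H a b c d) : ℂ) = (Q:ℂ)^3 :=
    rowsum hU hrow
  have hfe : ∀ a b, ∑ c, ∑ d, (normSq (Sk H a b c d) : ℂ) * x c d = (Q:ℂ)^3 * x a b :=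
    (fix_iff hQ0 x).mp hfix
  have hrsR : ∀ a b : Fin Q, ∑ c, ∑ d, normSq (Sk H a b c d) = (Q:ℝ)^3 := by
    intro a b
    have h2 : ((∑ c, ∑ d, normSq (Sk H a b c d) : ℝ) : ℂ) = (((Q:ℝ)^3 : ℝ) : ℂ) := by
      push_cast
      exact hrsC a b
    exact_mod_cast h2
  set N : Fin Q × Fin Q → Fin Q × Fin Q → ℝ :=
    fun A B => normSq (Sk H A.1 A.2 B.1 B.2) with hN
  set X : Fin Q × Fin Q → ℂ := fun A => x A.1 A.2 with hX
  have hNnn : ∀ A B, 0 ≤ N A B := fun A B => normSq_nonneg _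
  have hNsymm : ∀ A B, N A B = N B A := by
    intro A B
    show normSq (Sk H A.1 A.2 B.1 B.2) = normSq (Sk H B.1 B.2 A.1 A.2)
    rw [← Sk_conj H A.1 A.2 B.1 B.2]
    exact (Complex.normSq_conj _).symm
  have hrs : ∀ A, ∑ B, N A B = (Q:ℝ)^3 := by
    intro A
    rw [Fintype.sum_prod_type]
    exact hrsR A.1 A.2
  have hcs : ∀ B, ∑ A, N A B = (Q:ℝ)^3 := by
    intro B
    simp_rw [fun A => hNsymm A B]
    exact hrs B
  have hfeP : ∀ A, ∑ B, (N A B : ℂ) * X B = (Q:ℂ)^3 * X A := by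
    intro A
    rw [Fintype.sum_prod_type]
    exact hfe A.1 A.2
  have T3 : ∀ A, ∑ B, N A B * (X A * 𝕔 (X B)).re = (Q:ℝ)^3 * normSq (X A) := by
    intro A
    have hc : ∑ B, ((N A B : ℂ) * (X A * 𝕔 (X B)))
        = (Q:ℂ)^3 * (normSq (X A) : ℂ) := by
      calc ∑ B, ((N A B : ℂ) * (X A * 𝕔 (X B)))
          = X A * 𝕔 (∑ B, (N A B : ℂ) * X B) := by
            rw [map_sum, Finset.mul_sum]
            refine Finset.sum_congr rfl fun B _ => ?_
            rw [map_mul]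
            simp only [Complex.conj_ofReal]
            ring
        _ = X A * 𝕔 ((Q:ℂ)^3 * X A) := by rw [hfeP A]
        _ = (Q:ℂ)^3 * (normSq (X A) : ℂ) := by
            rw [map_mul, ← Complex.mul_conj]
            have hq : 𝕔 ((Q:ℂ)^3) = (Q:ℂ)^3 := by simp
            rw [hq]; ring
    have hre := congrArg Complex.re hc
    rw [Complex.re_sum] at hre
    have hL : ∀ B, ((N A B : ℂ) * (X A * 𝕔 (X B))).re
        = N A B * (X A * 𝕔 (X B)).re := by
      intro B
      rw [Complex.re_ofReal_mul]
    rw [Finset.sum_congr rfl fun B _ => hL B] at hre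
    rw [hre]
    have : ((Q:ℂ)^3 * ((normSq (X A) : ℝ) : ℂ)) = (((Q:ℝ)^3 * normSq (X A) : ℝ) : ℂ) := by
      push_cast; ring
    rw [this, Complex.ofReal_re]
  have expand : ∀ A B, N A B * normSq (X A - X B)
      = N A B * normSq (X A) + N A B * normSq (X B)
        - 2 * (N A B * (X A * 𝕔 (X B)).re) := by
    intro A B; rw [Complex.normSq_sub]; ring
  have key : ∑ A, ∑ B, N A B * normSq (X A - X B) = 0 := by
    calc ∑ A, ∑ B, N A B * normSq (X A - X B)
        = ∑ A, ((∑ B, N A B * normSq (X A)) + (∑ B, N A B * normSq (X B))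
            - 2 * ∑ B, N A B * (X A * 𝕔 (X B)).re) := by
          refine Finset.sum_congr rfl fun A _ => ?_
          simp_rw [expand]
          rw [Finset.sum_sub_distrib, Finset.sum_add_distrib, Finset.mul_sum]
      _ = ∑ A, ((Q:ℝ)^3 * normSq (X A) + (∑ B, N A B * normSq (X B))
            - 2 * ((Q:ℝ)^3 * normSq (X A))) := by
          refine Finset.sum_congr rfl fun A _ => ?_
          rw [T3 A, ← Finset.sum_mul, hrs A]
      _ = (∑ A, (Q:ℝ)^3 * normSq (X A)) + (∑ A, ∑ B, N A B * normSq (X B))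
            - 2 * ∑ A, (Q:ℝ)^3 * normSq (X A) := by
          rw [Finset.sum_sub_distrib, Finset.sum_add_distrib, Finset.mul_sum]
      _ = 0 := by
          have h2 : ∑ A, ∑ B, N A B * normSq (X B) = ∑ A, (Q:ℝ)^3 * normSq (X A) := by
            rw [Finset.sum_comm]
            refine Finset.sum_congr rfl fun B _ => ?_
            rw [← Finset.sum_mul, hcs B]
          rw [h2]; ring
  have h1 := (Finset.sum_eq_zero_iff_of_nonneg
    (fun A _ => Finset.sum_nonneg fun B _ => mul_nonneg (hNnn A B) (normSq_nonneg _))).mp key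
  intro a b c d hS
  have hterm := (Finset.sum_eq_zero_iff_of_nonneg
    (fun B _ => mul_nonneg (hNnn (a,b) B) (normSq_nonneg _))).mp
      (h1 (a,b) (mem_univ _)) (c,d) (mem_univ _)
  have hN0 : N (a,b) (c,d) ≠ 0 := fun h => hS (Complex.normSq_eq_zero.mp h)
  rcases mul_eq_zero.mp hterm with h | h
  · exact absurd h hN0
  · exact sub_eq_zero.mp (Complex.normSq_eq_zero.mp h)

include hU hrow in
lemma LC_to_fix (hQ0 : (Q:ℂ) ≠ 0) {x : Matrix (Fin Q) (Fin Q) ℂ}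
    (hLC : LC H x) : angleOp H x = x := by
  rw [fix_iff hQ0]
  intro a b
  calc ∑ c, ∑ d, (normSq (Sk H a b c d) : ℂ) * x c d
      = ∑ c, ∑ d, (normSq (Sk H a b c d) : ℂ) * x a b := by
        refine Finset.sum_congr rfl fun c _ => Finset.sum_congr rfl fun d _ => ?_
        by_cases hS : Sk H a b c d = 0
        · simp [hS]
        · rw [hLC a b c d hS]
    _ = (∑ c, ∑ d, (normSq (Sk H a b c d) : ℂ)) * x a b := by
        rw [Finset.sum_mul]
        exact Finset.sum_congr rfl fun c _ => (Finset.sum_mul _ _ _).symm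
    _ = (Q:ℂ)^3 * x a b := by rw [rowsum hU hrow a b]

include hU hrow in
lemma LC_to_wit (hQ : 1 ≤ Q) {x : Matrix (Fin Q) (Fin Q) ℂ} (hLC : LC H x) :
    ∃ Y, Wit H Y x := by
  have hQ0 : (Q:ℂ) ≠ 0 := Nat.cast_ne_zero.mpr (by omega)
  set a0 : Fin Q := ⟨0, hQ⟩ with ha0
  refine ⟨fun m n => (Q:ℂ)⁻¹ * ∑ e, x a0 e * (H m a0 * 𝕔 (H m e)) * (𝕔 (H n a0) * H n e),
    ?_⟩
  intro c d m
  have key2 : ∑ e, (H m a0 * 𝕔 (H m e)) * Sk H a0 e c d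
      = (Q:ℂ) * (H m c * 𝕔 (H m d)) := by
    calc ∑ e, (H m a0 * 𝕔 (H m e)) * Sk H a0 e c d
        = ∑ e, ∑ n, (H m a0 * 𝕔 (H m e)) * (H n c * 𝕔 (H n d) * 𝕔 (H n a0) * H n e) := by
          refine Finset.sum_congr rfl fun e _ => ?_
          rw [Sk, Finset.mul_sum]
      _ = ∑ n, ∑ e, (H m a0 * 𝕔 (H m e)) * (H n c * 𝕔 (H n d) * 𝕔 (H n a0) * H n e) :=
          Finset.sum_comm
      _ = ∑ n, (H n c * 𝕔 (H n d) * 𝕔 (H n a0) * H m a0) * (∑ e, 𝕔 (H m e) * H n e) := by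
          refine Finset.sum_congr rfl fun n _ => ?_
          rw [Finset.mul_sum]
          exact Finset.sum_congr rfl fun e _ => by ring
      _ = ∑ n, (H n c * 𝕔 (H n d) * 𝕔 (H n a0) * H m a0) * (if m = n then (Q:ℂ) else 0) := by
          refine Finset.sum_congr rfl fun n _ => ?_
          rw [hrowc hrow]
      _ = (H m c * 𝕔 (H m d) * 𝕔 (H m a0) * H m a0) * (Q:ℂ) := by
          simp [Finset.sum_ite_eq, mul_ite, mul_zero]
      _ = (Q:ℂ) * (H m c * 𝕔 (H m d)) := by
          have : 𝕔 (H m a0) * H m a0 = 1 := by rw [mul_comm]; exact hU m a0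
          calc (H m c * 𝕔 (H m d) * 𝕔 (H m a0) * H m a0) * (Q:ℂ)
              = (H m c * 𝕔 (H m d)) * (𝕔 (H m a0) * H m a0) * (Q:ℂ) := by ring
            _ = (Q:ℂ) * (H m c * 𝕔 (H m d)) := by rw [this]; ring
  calc ∑ n, ((Q:ℂ)⁻¹ * ∑ e, x a0 e * (H m a0 * 𝕔 (H m e)) * (𝕔 (H n a0) * H n e))
        * (H n c * 𝕔 (H n d))
      = ∑ n, (Q:ℂ)⁻¹ * ∑ e, x a0 e * (H m a0 * 𝕔 (H m e))
          * ((𝕔 (H n a0) * H n e) * (H n c * 𝕔 (H n d))) := by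
        refine Finset.sum_congr rfl fun n _ => ?_
        rw [mul_assoc, Finset.sum_mul]
        congr 1
        exact Finset.sum_congr rfl fun e _ => by ring
    _ = (Q:ℂ)⁻¹ * ∑ n, ∑ e, x a0 e * (H m a0 * 𝕔 (H m e))
          * ((𝕔 (H n a0) * H n e) * (H n c * 𝕔 (H n d))) := (Finset.mul_sum _ _ _).symm
    _ = (Q:ℂ)⁻¹ * ∑ e, x a0 e * (H m a0 * 𝕔 (H m e)) * Sk H a0 e c d := by
        rw [Finset.sum_comm]
        congr 1
        refine Finset.sum_congr rfl fun e _ => ?_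
        rw [Sk, Finset.mul_sum]
        exact Finset.sum_congr rfl fun n _ => by ring
    _ = (Q:ℂ)⁻¹ * ∑ e, x c d * (H m a0 * 𝕔 (H m e)) * Sk H a0 e c d := by
        congr 1
        refine Finset.sum_congr rfl fun e _ => ?_
        by_cases hS : Sk H a0 e c d = 0
        · simp [hS]
        · rw [hLC a0 e c d hS]
    _ = (Q:ℂ)⁻¹ * (x c d * ∑ e, (H m a0 * 𝕔 (H m e)) * Sk H a0 e c d) := by
        congr 1
        rw [Finset.mul_sum]
        exact Finset.sum_congr rfl fun e _ => by ring
    _ = (Q:ℂ)⁻¹ * (x c d * ((Q:ℂ) * (H m c * 𝕔 (H m d)))) := by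
        rw [key2]
    _ = x c d * (H m c * 𝕔 (H m d)) := by
        rw [show (Q:ℂ)⁻¹ * (x c d * ((Q:ℂ) * (H m c * 𝕔 (H m d))))
            = ((Q:ℂ)⁻¹ * (Q:ℂ)) * (x c d * (H m c * 𝕔 (H m d))) from by ring,
          inv_mul_cancel₀ hQ0, one_mul]

include hU hrow in
lemma wit_rep {Y x : Matrix (Fin Q) (Fin Q) ℂ} (hW : Wit H Y x) (a m n : Fin Q) :
    (Q:ℂ) * Y m n = ∑ b, x a b * ((H m a * 𝕔 (H m b)) * (𝕔 (H n a) * H n b)) := by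
  symm
  calc ∑ b, x a b * ((H m a * 𝕔 (H m b)) * (𝕔 (H n a) * H n b))
      = ∑ b, ∑ p, Y m p * ((H p a * 𝕔 (H p b)) * (𝕔 (H n a) * H n b)) := by
        refine Finset.sum_congr rfl fun b _ => ?_
        have h1 : x a b * ((H m a * 𝕔 (H m b)) * (𝕔 (H n a) * H n b))
            = (x a b * (H m a * 𝕔 (H m b))) * (𝕔 (H n a) * H n b) := by ring
        rw [h1, ← hW a b m, Finset.sum_mul]
        exact Finset.sum_congr rfl fun p _ => by ring
    _ = ∑ p, Y m p * ∑ b, (H p a * 𝕔 (H p b)) * (𝕔 (H n a) * H n b) := by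
        rw [Finset.sum_comm]
        refine Finset.sum_congr rfl fun p _ => ?_
        rw [Finset.mul_sum]
    _ = ∑ p, Y m p * (if n = p then (Q:ℂ) else 0) := by
        refine Finset.sum_congr rfl fun p _ => ?_
        congr 1
        calc ∑ b, (H p a * 𝕔 (H p b)) * (𝕔 (H n a) * H n b)
            = (H p a * 𝕔 (H n a)) * ∑ b, 𝕔 (H p b) * H n b := by
              rw [Finset.mul_sum]
              exact Finset.sum_congr rfl fun b _ => by ring
          _ = (H p a * 𝕔 (H n a)) * (if p = n then (Q:ℂ) else 0) := by rw [hrowc hrow]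
          _ = if n = p then (Q:ℂ) else 0 := by
              by_cases h : p = n
              · subst h
                simp [hU p a]
              · simp [h, Ne.symm h]
    _ = (Q:ℂ) * Y m n := by
        simp [Finset.sum_ite_eq, mul_ite, mul_zero, mul_comm]

include hU hrow hcol in
lemma wit_to_LC (hQ0 : (Q:ℂ) ≠ 0) {Y x : Matrix (Fin Q) (Fin Q) ℂ}
    (hW : Wit H Y x) : LC H x := by
  intro a b c d hS
  have hvy : ∀ p, ∑ n, (𝕔 (H n a) * H n b) * Y n p = x a b * (𝕔 (H p a) * H p b) := by
    intro p
    have h1 : (Q:ℂ) * ∑ n, (𝕔 (H n a) * H n b) * Y n p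
        = ∑ n, (𝕔 (H n a) * H n b) * ((Q:ℂ) * Y n p) := by
      rw [Finset.mul_sum]
      exact Finset.sum_congr rfl fun n _ => by ring
    have h2 : ∑ n, (𝕔 (H n a) * H n b) * ((Q:ℂ) * Y n p)
        = (Q:ℂ) * (x a b * (𝕔 (H p a) * H p b)) := by
      calc ∑ n, (𝕔 (H n a) * H n b) * ((Q:ℂ) * Y n p)
          = ∑ n, (𝕔 (H n a) * H n b)
              * ∑ b', x a b' * ((H n a * 𝕔 (H n b')) * (𝕔 (H p a) * H p b')) := by
            refine Finset.sum_congr rfl fun n _ => ?_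
            rw [wit_rep hU hrow hW a n p]
        _ = ∑ n, ∑ b', x a b' * (𝕔 (H p a) * H p b')
              * ((𝕔 (H n a) * H n a) * (H n b * 𝕔 (H n b'))) := by
            refine Finset.sum_congr rfl fun n _ => ?_
            rw [Finset.mul_sum]
            exact Finset.sum_congr rfl fun b' _ => by ring
        _ = ∑ n, ∑ b', x a b' * (𝕔 (H p a) * H p b') * (H n b * 𝕔 (H n b')) := by
            refine Finset.sum_congr rfl fun n _ => Finset.sum_congr rfl fun b' _ => ?_
            have : 𝕔 (H n a) * H n a = 1 := by rw [mul_comm]; exact hU n a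
            rw [this, one_mul]
        _ = ∑ b', x a b' * (𝕔 (H p a) * H p b') * (∑ n, H n b * 𝕔 (H n b')) := by
            rw [Finset.sum_comm]
            exact Finset.sum_congr rfl fun b' _ => by rw [Finset.mul_sum]
        _ = ∑ b', x a b' * (𝕔 (H p a) * H p b') * (if b = b' then (Q:ℂ) else 0) := by
            refine Finset.sum_congr rfl fun b' _ => ?_
            rw [hcol]
        _ = (Q:ℂ) * (x a b * (𝕔 (H p a) * H p b)) := by
            simp [Finset.sum_ite_eq, mul_ite, mul_zero]
            ring
    have h3 := h1.trans h2
    exact mul_left_cancel₀ hQ0 h3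
  have way1 : ∑ n, (𝕔 (H n a) * H n b) * (∑ p, Y n p * (H p c * 𝕔 (H p d)))
      = x c d * Sk H a b c d := by
    calc ∑ n, (𝕔 (H n a) * H n b) * (∑ p, Y n p * (H p c * 𝕔 (H p d)))
        = ∑ n, (𝕔 (H n a) * H n b) * (x c d * (H n c * 𝕔 (H n d))) := by
          refine Finset.sum_congr rfl fun n _ => ?_
          rw [hW c d n]
      _ = x c d * Sk H a b c d := by
          rw [Sk, Finset.mul_sum]
          exact Finset.sum_congr rfl fun n _ => by ring
  have way2 : ∑ n, (𝕔 (H n a) * H n b) * (∑ p, Y n p * (H p c * 𝕔 (H p d)))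
      = x a b * Sk H a b c d := by
    calc ∑ n, (𝕔 (H n a) * H n b) * (∑ p, Y n p * (H p c * 𝕔 (H p d)))
        = ∑ n, ∑ p, ((𝕔 (H n a) * H n b) * Y n p) * (H p c * 𝕔 (H p d)) := by
          refine Finset.sum_congr rfl fun n _ => ?_
          rw [Finset.mul_sum]
          exact Finset.sum_congr rfl fun p _ => by ring
      _ = ∑ p, (∑ n, (𝕔 (H n a) * H n b) * Y n p) * (H p c * 𝕔 (H p d)) := by
          rw [Finset.sum_comm]
          exact Finset.sum_congr rfl fun p _ => by rw [Finset.sum_mul]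
      _ = ∑ p, (x a b * (𝕔 (H p a) * H p b)) * (H p c * 𝕔 (H p d)) := by
          refine Finset.sum_congr rfl fun p _ => ?_
          rw [hvy p]
      _ = x a b * Sk H a b c d := by
          rw [Sk, Finset.mul_sum]
          exact Finset.sum_congr rfl fun p _ => by ring
  have := way2.symm.trans way1
  exact mul_right_cancel₀ hS this

include hU hrow in
lemma wit_dual {Y x : Matrix (Fin Q) (Fin Q) ℂ} (hW : Wit H Y x) :
    Wit Hᴴ x (fun m n => (Q:ℂ) * Y m n) := by
  intro c d m
  show ∑ n, x m n * (Hᴴ n c * 𝕔 (Hᴴ n d)) = ((Q:ℂ) * Y c d) * (Hᴴ m c * 𝕔 (Hᴴ m d))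
  have hcT : ∀ i j, Hᴴ i j = 𝕔 (H j i) := fun i j => rfl
  simp only [hcT, Complex.conj_conj]
  rw [wit_rep hU hrow hW m c d, Finset.sum_mul]
  refine Finset.sum_congr rfl fun e _ => ?_
  calc x m e * (𝕔 (H c e) * H d e)
      = x m e * (𝕔 (H c e) * H d e) * ((H c m * 𝕔 (H c m)) * (H d m * 𝕔 (H d m))) := by
        rw [hU c m, hU d m]; ring
    _ = x m e * ((H c m * 𝕔 (H c e)) * (𝕔 (H d m) * H d e)) * (𝕔 (H c m) * H d m) := by
        ring

lemma wit_schur {G A B f g : Matrix (Fin Q) (Fin Q) ℂ}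
    (hA : Wit G A f) (hB : Wit G B g) :
    Wit G (A * B) (fun c d => f c d * g c d) := by
  intro c d m
  show ∑ n, (A * B) m n * (G n c * 𝕔 (G n d)) = (f c d * g c d) * (G m c * 𝕔 (G m d))
  calc ∑ n, (A * B) m n * (G n c * 𝕔 (G n d))
      = ∑ n, ∑ p, A m p * (B p n * (G n c * 𝕔 (G n d))) := by
        refine Finset.sum_congr rfl fun n _ => ?_
        rw [Matrix.mul_apply, Finset.sum_mul]
        exact Finset.sum_congr rfl fun p _ => by ring
    _ = ∑ p, A m p * ∑ n, B p n * (G n c * 𝕔 (G n d)) := by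
        rw [Finset.sum_comm]
        exact Finset.sum_congr rfl fun p _ => by rw [Finset.mul_sum]
    _ = ∑ p, A m p * (g c d * (G p c * 𝕔 (G p d))) := by
        refine Finset.sum_congr rfl fun p _ => ?_
        rw [hB c d p]
    _ = g c d * ∑ p, A m p * (G p c * 𝕔 (G p d)) := by
        rw [Finset.mul_sum]
        exact Finset.sum_congr rfl fun p _ => by ring
    _ = (f c d * g c d) * (G m c * 𝕔 (G m d)) := by
        rw [hA c d m]; ring

lemma wit_unscale (hQ0 : (Q:ℂ) ≠ 0) {Z w : Matrix (Fin Q) (Fin Q) ℂ}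
    (hW : Wit H Z (fun c d => (Q:ℂ) * w c d)) :
    Wit H (fun m n => (Q:ℂ)⁻¹ * Z m n) w := by
  intro c d m
  show ∑ n, ((Q:ℂ)⁻¹ * Z m n) * (H n c * 𝕔 (H n d)) = w c d * (H m c * 𝕔 (H m d))
  calc ∑ n, ((Q:ℂ)⁻¹ * Z m n) * (H n c * 𝕔 (H n d))
      = (Q:ℂ)⁻¹ * ∑ n, Z m n * (H n c * 𝕔 (H n d)) := by
        rw [Finset.mul_sum]
        exact Finset.sum_congr rfl fun n _ => by ring
    _ = (Q:ℂ)⁻¹ * (((Q:ℂ) * w c d) * (H m c * 𝕔 (H m d))) := by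
        rw [hW c d m]
    _ = w c d * (H m c * 𝕔 (H m d)) := by
        rw [show (Q:ℂ)⁻¹ * (((Q:ℂ) * w c d) * (H m c * 𝕔 (H m d)))
            = ((Q:ℂ)⁻¹ * (Q:ℂ)) * (w c d * (H m c * 𝕔 (H m d))) from by ring,
          inv_mul_cancel₀ hQ0, one_mul]

include hU hcol in
lemma LC_one : LC H (1 : Matrix (Fin Q) (Fin Q) ℂ) := by
  intro a b c d hS
  by_cases hab : a = b
  · subst hab
    have hskaa : Sk H a a c d = if c = d then (Q:ℂ) else 0 := by
      rw [Sk]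
      calc ∑ m, H m c * 𝕔 (H m d) * 𝕔 (H m a) * H m a
          = ∑ m, H m c * 𝕔 (H m d) := by
            refine Finset.sum_congr rfl fun m _ => ?_
            have : 𝕔 (H m a) * H m a = 1 := by rw [mul_comm]; exact hU m a
            calc H m c * 𝕔 (H m d) * 𝕔 (H m a) * H m a
                = H m c * 𝕔 (H m d) * (𝕔 (H m a) * H m a) := by ring
              _ = H m c * 𝕔 (H m d) := by rw [this, mul_one]
        _ = if c = d then (Q:ℂ) else 0 := hcol c d
    rw [hskaa] at hS
    have hcd : c = d := by
      by_contra h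
      simp [h] at hS
    subst hcd
    simp [Matrix.one_apply]
  · have hcd : c ≠ d := by
      intro h
      subst h
      apply hS
      rw [Sk]
      calc ∑ m, H m c * 𝕔 (H m c) * 𝕔 (H m a) * H m b
          = ∑ m, 𝕔 (H m a) * H m b := by
            refine Finset.sum_congr rfl fun m _ => ?_
            calc H m c * 𝕔 (H m c) * 𝕔 (H m a) * H m b
                = (H m c * 𝕔 (H m c)) * (𝕔 (H m a) * H m b) := by ring
              _ = 𝕔 (H m a) * H m b := by rw [hU, one_mul]
        _ = 0 := by rw [hcolc hcol a b]; simp [hab]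
    simp [Matrix.one_apply, hab, hcd]

lemma LC_star {x : Matrix (Fin Q) (Fin Q) ℂ} (hLC : LC H x) : LC H xᴴ := by
  intro a b c d hS
  have h2 : Sk H b a d c ≠ 0 := by
    rw [Sk_swap]
    intro h
    apply hS
    have := congrArg 𝕔 h
    rwa [Complex.conj_conj, map_zero] at this
  have := hLC b a d c h2
  show xᴴ a b = xᴴ c d
  have hcT : ∀ (M : Matrix (Fin Q) (Fin Q) ℂ) i j, Mᴴ i j = 𝕔 (M j i) := fun M i j => rfl
  rw [hcT, hcT, this]

end Main

end AngleAux

/-- For every complex Hadamard matrix `H` of size `Q ≥ 1`, the fixed-point set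
`{x : Θ_H x = x}` of the angle operator is a commutative unital *-subalgebra of `M_Q(ℂ)`:
it contains the identity, is closed under addition, scalar multiplication, matrix
multiplication and conjugate transpose, and any two of its elements commute. -/
theorem angleOp_fixedPoints_commutative_star_subalgebra
    (Q : ℕ) (hQ : 1 ≤ Q) (H : Matrix (Fin Q) (Fin Q) ℂ)
    (h_unimodular : ∀ i j, ‖H i j‖ = 1)
    (h_hadamard : H * Hᴴ = (Q : ℂ) • (1 : Matrix (Fin Q) (Fin Q) ℂ)) :
    angleOp H (1 : Matrix (Fin Q) (Fin Q) ℂ) = 1 ∧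
    (∀ x y : Matrix (Fin Q) (Fin Q) ℂ,
      angleOp H x = x → angleOp H y = y → angleOp H (x + y) = x + y) ∧
    (∀ (c : ℂ) (x : Matrix (Fin Q) (Fin Q) ℂ),
      angleOp H x = x → angleOp H (c • x) = c • x) ∧
    (∀ x y : Matrix (Fin Q) (Fin Q) ℂ,
      angleOp H x = x → angleOp H y = y → angleOp H (x * y) = x * y) ∧
    (∀ x : Matrix (Fin Q) (Fin Q) ℂ, angleOp H x = x → angleOp H xᴴ = xᴴ) ∧
    (∀ x y : Matrix (Fin Q) (Fin Q) ℂ,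
      angleOp H x = x → angleOp H y = y → x * y = y * x) := by
  classical
  open AngleAux Complex in
  have hQ0 : (Q:ℂ) ≠ 0 := Nat.cast_ne_zero.mpr (by omega)
  have hU : ∀ i j, H i j * (starRingEnd ℂ) (H i j) = 1 := by
    intro i j
    rw [Complex.mul_conj, ← Complex.sq_norm, h_unimodular]
    norm_num
  have hHne : ∀ i j, H i j ≠ 0 := by
    intro i j h
    have := h_unimodular i j
    rw [h] at this
    simp at this
  -- row orthogonality
  have hrow : ∀ p q, (∑ b, H p b * (starRingEnd ℂ) (H q b)) = if p = q then (Q:ℂ) else 0 := by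
    intro p q
    have h1 := congrFun (congrFun h_hadamard p) q
    rw [Matrix.mul_apply] at h1
    simp only [Matrix.conjTranspose_apply, Matrix.smul_apply, Matrix.one_apply,
      smul_eq_mul] at h1
    have h2 : ∑ j, H p j * (starRingEnd ℂ) (H q j) = (Q:ℂ) * (if p = q then 1 else 0) := h1
    rw [h2]
    split <;> simp
  -- column orthogonality
  have hcolM : Hᴴ * H = (Q : ℂ) • (1 : Matrix (Fin Q) (Fin Q) ℂ) := by
    have h1 : H * ((Q:ℂ)⁻¹ • Hᴴ) = 1 := by
      rw [Matrix.mul_smul, h_hadamard, smul_smul, inv_mul_cancel₀ hQ0, one_smul]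
    have h2 := mul_eq_one_comm.mp h1
    calc Hᴴ * H = (Q:ℂ) • (((Q:ℂ)⁻¹ • Hᴴ) * H) := by
          rw [Matrix.smul_mul, smul_smul, mul_inv_cancel₀ hQ0, one_smul]
      _ = (Q:ℂ) • (1 : Matrix (Fin Q) (Fin Q) ℂ) := by rw [h2]
  have hcol : ∀ b c, (∑ p, H p b * (starRingEnd ℂ) (H p c)) = if b = c then (Q:ℂ) else 0 := by
    intro b c
    have h1 := congrFun (congrFun hcolM c) b
    rw [Matrix.mul_apply] at h1
    simp only [Matrix.conjTranspose_apply, Matrix.smul_apply, Matrix.one_apply,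
      smul_eq_mul] at h1
    have h2 : ∑ p, (starRingEnd ℂ) (H p c) * H p b = (Q:ℂ) * (if c = b then 1 else 0) := h1
    have h3 : ∑ p, H p b * (starRingEnd ℂ) (H p c)
        = ∑ p, (starRingEnd ℂ) (H p c) * H p b :=
      Finset.sum_congr rfl fun p _ => mul_comm _ _
    rw [h3, h2]
    by_cases h : b = c
    · subst h; simp
    · simp [h, Ne.symm h]
  -- hypotheses for Hᴴ
  have hcT : ∀ i j, Hᴴ i j = (starRingEnd ℂ) (H j i) := fun i j => rfl
  have hU' : ∀ i j, Hᴴ i j * (starRingEnd ℂ) (Hᴴ i j) = 1 := by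
    intro i j
    rw [hcT, Complex.conj_conj, mul_comm]
    exact hU j i
  have hrow' : ∀ p q, (∑ b, Hᴴ p b * (starRingEnd ℂ) (Hᴴ q b)) = if p = q then (Q:ℂ) else 0 := by
    intro p q
    simp only [hcT, Complex.conj_conj]
    exact hcolc hcol p q
  have hcol' : ∀ b c, (∑ p, Hᴴ p b * (starRingEnd ℂ) (Hᴴ p c)) = if b = c then (Q:ℂ) else 0 := by
    intro b c
    simp only [hcT, Complex.conj_conj]
    exact hrowc hrow b c
  refine ⟨?_, ?_, ?_, ?_, ?_, ?_⟩
  · exact LC_to_fix hU hrow hQ0 (LC_one hU hcol)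
  · intro x y hx hy
    rw [map_add, hx, hy]
  · intro c x hx
    rw [map_smul, hx]
  · intro x y hx hy
    obtain ⟨Yx, hYx⟩ := LC_to_wit hU hrow hQ (fix_to_LC hU hrow hQ0 hx)
    obtain ⟨Yy, hYy⟩ := LC_to_wit hU hrow hQ (fix_to_LC hU hrow hQ0 hy)
    have dx := wit_dual hU hrow hYx
    have dy := wit_dual hU hrow hYy
    have hs := wit_schur dx dy
    have dd := wit_dual hU' hrow' hs
    rw [Matrix.conjTranspose_conjTranspose] at dd
    have du := wit_unscale hQ0 dd
    exact LC_to_fix hU hrow hQ0 (wit_to_LC hU hrow hcol hQ0 du)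
  · intro x hx
    exact LC_to_fix hU hrow hQ0 (LC_star (fix_to_LC hU hrow hQ0 hx))
  · intro x y hx hy
    obtain ⟨Yx, hYx⟩ := LC_to_wit hU hrow hQ (fix_to_LC hU hrow hQ0 hx)
    obtain ⟨Yy, hYy⟩ := LC_to_wit hU hrow hQ (fix_to_LC hU hrow hQ0 hy)
    have dx := wit_dual hU hrow hYx
    have dy := wit_dual hU hrow hYy
    have hs1 := wit_schur dx dy
    have hs2 := wit_schur dy dx
    have dd1 := wit_dual hU' hrow' hs1
    have dd2 := wit_dual hU' hrow' hs2
    rw [Matrix.conjTranspose_conjTranspose] at dd1 dd2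
    have du1 := wit_unscale hQ0 dd1
    have du2 := wit_unscale hQ0 dd2
    -- same witness matrix for x*y and y*x
    have hWW : (fun m n => (Q:ℂ)⁻¹ * (fun c d => ((Q:ℂ) * Yy c d) * ((Q:ℂ) * Yx c d)) m n)
        = (fun m n => (Q:ℂ)⁻¹ * (fun c d => ((Q:ℂ) * Yx c d) * ((Q:ℂ) * Yy c d)) m n) := by
      funext m n
      simp only
      ring
    rw [hWW] at du2
    set a0 : Fin Q := ⟨0, hQ⟩ with ha0
    ext c d
    have e1 := du1 c d a0
    have e2 := du2 c d a0
    have e3 := e1.symm.trans e2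
    have hv : H a0 c * (starRingEnd ℂ) (H a0 d) ≠ 0 := by
      apply mul_ne_zero (hHne a0 c)
      intro h
      have := congrArg (starRingEnd ℂ) h
      rw [Complex.conj_conj, map_zero] at this
      exact hHne a0 d this
    exact mul_right_cancel₀ hv e3
end

section
/- Let H be a complex Hilbert space and T a bounded self-adjoint operator on H. Suppose (V_n)_{n∈ℕ} is an increasing sequence of finite-dimensional subspaces of H, each invariant under T, whose union is dense in H. Then the spectrum of T equals the closure of the union over n of the spectra of the restrictions T|_{V_n} (each restriction being an operator on the finite-dimensional space V_n, whose spectrum is its set of eigenvalues). -/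
open scoped BigOperators

open ContinuousLinearMap in
/-- A self-adjoint bounded-below operator on a complex Hilbert space is invertible. -/
lemma aux_isUnit_of_selfAdjoint_boundedBelow
    {E : Type*} [NormedAddCommGroup E] [InnerProductSpace ℂ E] [CompleteSpace E]
    (S : E →L[ℂ] E) (hS : IsSelfAdjoint S) {δ : ℝ} (hδ : 0 < δ)
    (hb : ∀ x, δ * ‖x‖ ≤ ‖S x‖) : IsUnit S := by
  rw [ContinuousLinearMap.isUnit_iff_bijective, S.bijective_iff_dense_range_and_antilipschitz]
  have h_anti : AntilipschitzWith (⟨δ, hδ.le⟩ : NNReal)⁻¹ S := by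
    refine S.antilipschitz_of_bound fun x => ?_
    show ‖x‖ ≤ δ⁻¹ * ‖S x‖
    rw [le_inv_mul_iff₀ hδ]
    exact hb x
  refine ⟨?_, ⟨_, h_anti⟩⟩
  rw [Submodule.topologicalClosure_eq_top_iff, Submodule.eq_bot_iff]
  intro y hy
  have hSy : S y = 0 := by
    have h1 : ∀ x : E, inner ℂ x (S y) = (0 : ℂ) := by
      intro x
      have h2 : inner ℂ (S x) y = (0 : ℂ) :=
        hy (S x) (LinearMap.mem_range_self _ x)
      calc inner ℂ x (S y) = inner ℂ ((ContinuousLinearMap.adjoint S) x) y := by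
            rw [ContinuousLinearMap.adjoint_inner_left]
        _ = inner ℂ (S x) y := by rw [hS.adjoint_eq]
        _ = 0 := h2
    have := h1 (S y)
    rwa [inner_self_eq_zero] at this
  have := hb y
  rw [hSy, norm_zero] at this
  have hy0 : ‖y‖ = 0 := by nlinarith [norm_nonneg y]
  exact norm_eq_zero.mp hy0

/-- Quantitative lower bound for a symmetric operator on a finite-dimensional space:
if `λ` is at distance at least `δ` from the spectrum, then `f - λ` is bounded below by `δ`. -/
lemma aux_boundedBelow_of_dist_spectrum
    {F : Type*} [NormedAddCommGroup F] [InnerProductSpace ℂ F] [FiniteDimensional ℂ F]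
    {f : F →ₗ[ℂ] F} (hf : f.IsSymmetric) {l : ℂ} {δ : ℝ} (hδ : 0 ≤ δ)
    (h : ∀ μ ∈ spectrum ℂ f, δ ≤ ‖μ - l‖) (x : F) :
    δ * ‖x‖ ≤ ‖f x - l • x‖ := by
  set n := Module.finrank ℂ F with hn'
  have hn : Module.finrank ℂ F = n := rfl
  set b := hf.eigenvectorBasis hn with hb
  have hspec : ∀ i : Fin n, ((hf.eigenvalues hn i : ℂ)) ∈ spectrum ℂ f := fun i =>
    Module.End.hasEigenvalue_iff_mem_spectrum.mp (hf.hasEigenvalue_eigenvalues hn i)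
  have hrepr : ∀ i : Fin n,
      b.repr (f x - l • x) i = ((hf.eigenvalues hn i : ℂ) - l) * b.repr x i := by
    intro i
    rw [map_sub, map_smul]
    simp only [PiLp.sub_apply, PiLp.smul_apply, smul_eq_mul]
    rw [hf.eigenvectorBasis_apply_self_apply hn x i]
    rw [show (RCLike.ofReal (hf.eigenvalues hn i) : ℂ)
        = ((hf.eigenvalues hn i : ℝ) : ℂ) from rfl]
    ring
  have hx : ‖x‖ = ‖b.repr x‖ := (b.repr.norm_map x).symm
  have hy : ‖f x - l • x‖ = ‖b.repr (f x - l • x)‖ := (b.repr.norm_map _).symm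
  rw [hx, hy, EuclideanSpace.norm_eq, EuclideanSpace.norm_eq]
  rw [← Real.sqrt_sq hδ, ← Real.sqrt_mul (by positivity), Finset.mul_sum]
  apply Real.sqrt_le_sqrt
  apply Finset.sum_le_sum
  intro i _
  rw [hrepr i, norm_mul]
  have hi : δ ≤ ‖(hf.eigenvalues hn i : ℂ) - l‖ := h _ (hspec i)
  calc δ ^ 2 * ‖b.repr x i‖ ^ 2 = (δ * ‖b.repr x i‖) ^ 2 := by ring
    _ ≤ (‖(hf.eigenvalues hn i : ℂ) - l‖ * ‖b.repr x i‖) ^ 2 := by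
        apply pow_le_pow_left₀ (by positivity)
        exact mul_le_mul_of_nonneg_right hi (norm_nonneg _)

/-- Let `T` be a bounded self-adjoint operator on a complex Hilbert space `E`, and let
`(V n)` be an increasing sequence of finite-dimensional `T`-invariant subspaces whose
union is dense.  Then the spectrum of `T` is the closure of the union of the spectra of
the restrictions `T|_{V n}`. -/
theorem spectrum_eq_closure_iUnion_spectrum_restrict
    {E : Type*} [NormedAddCommGroup E] [InnerProductSpace ℂ E] [CompleteSpace E]
    (T : E →L[ℂ] E) (hT : IsSelfAdjoint T)
    (V : ℕ → Submodule ℂ E) (hmono : Monotone V)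
    (hfd : ∀ n, FiniteDimensional ℂ (V n))
    (hinv : ∀ n, ∀ x ∈ V n, T x ∈ V n)
    (hdense : Dense (⋃ n, (V n : Set E))) :
    spectrum ℂ T =
      closure (⋃ n, spectrum ℂ ((T : E →ₗ[ℂ] E).restrict (hinv n))) := by
  haveI := hfd
  -- the restrictions are symmetric
  have hsym : ∀ n, ((T : E →ₗ[ℂ] E).restrict (hinv n)).IsSymmetric := by
    intro n u v
    have hTsym : (T : E →ₗ[ℂ] E).IsSymmetric :=
      (ContinuousLinearMap.isSelfAdjoint_iff_isSymmetric).mp hT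
    simpa [LinearMap.restrict_apply, Submodule.coe_inner] using hTsym (u : E) (v : E)
  apply le_antisymm
  · -- spectrum T ⊆ closure of union
    intro l hl
    by_contra hlC
    set U : Set ℂ := ⋃ n, spectrum ℂ ((T : E →ₗ[ℂ] E).restrict (hinv n)) with hU
    obtain ⟨δ, hδ, hball⟩ := Metric.isOpen_iff.mp isClosed_closure.isOpen_compl l hlC
    have hdist : ∀ μ ∈ U, δ ≤ ‖μ - l‖ := by
      intro μ hμ
      by_contra hcon
      push_neg at hcon
      have : μ ∈ Metric.ball l δ := by
        rw [Metric.mem_ball, dist_eq_norm]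
        exact hcon
      exact hball this (subset_closure hμ)
    -- the operator l - T
    set S : E →L[ℂ] E := algebraMap ℂ (E →L[ℂ] E) l - T with hS
    have hSapp : ∀ x : E, S x = l • x - T x := by
      intro x
      simp [hS, Algebra.algebraMap_eq_smul_one]
    -- l is real
    have hlre : (starRingEnd ℂ) l = l := by
      rw [Complex.conj_eq_iff_re]
      exact (hT.mem_spectrum_eq_re hl).symm
    have hSsa : IsSelfAdjoint S := by
      rw [hS, IsSelfAdjoint, star_sub, hT.star_eq]
      congr 1
      rw [← algebraMap_star_comm]
      simp [hlre]
    -- lower bound on the union of the V n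
    have hbound : ∀ x : E, δ * ‖x‖ ≤ ‖S x‖ := by
      have hclosed : IsClosed {x : E | δ * ‖x‖ ≤ ‖S x‖} :=
        isClosed_le (continuous_const.mul continuous_norm) S.continuous.norm
      have hsub : (⋃ n, (V n : Set E)) ⊆ {x : E | δ * ‖x‖ ≤ ‖S x‖} := by
        rintro x hx
        obtain ⟨n, hxn⟩ := Set.mem_iUnion.mp hx
        set x' : V n := ⟨x, hxn⟩ with hx'
        have hkey : δ * ‖x'‖ ≤ ‖((T : E →ₗ[ℂ] E).restrict (hinv n)) x' - l • x'‖ :=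
          aux_boundedBelow_of_dist_spectrum (hsym n) hδ.le
            (fun μ hμ => hdist μ (Set.mem_iUnion.mpr ⟨n, hμ⟩)) x'
        have h1 : ‖x'‖ = ‖x‖ := rfl
        have h2 : ‖((T : E →ₗ[ℂ] E).restrict (hinv n)) x' - l • x'‖ = ‖S x‖ := by
          have : ((((T : E →ₗ[ℂ] E).restrict (hinv n)) x' - l • x' : V n) : E)
              = T x - l • x := by
            simp [LinearMap.restrict_apply, hx']
          rw [show ‖((T : E →ₗ[ℂ] E).restrict (hinv n)) x' - l • x'‖
              = ‖((((T : E →ₗ[ℂ] E).restrict (hinv n)) x' - l • x' : V n) : E)‖ from rfl,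
            this, hSapp, norm_sub_rev]
        rw [h1, h2] at hkey
        exact hkey
      intro x
      have hx : x ∈ closure (⋃ n, (V n : Set E)) := hdense x
      have := closure_mono hsub hx
      rwa [hclosed.closure_eq] at this
    have hunit : IsUnit S := aux_isUnit_of_selfAdjoint_boundedBelow S hSsa hδ hbound
    exact (spectrum.mem_iff.mp hl) hunit
  · -- closure of union ⊆ spectrum T
    apply closure_minimal _ (spectrum.isClosed T)
    apply Set.iUnion_subset
    intro n μ hμ
    have hev : Module.End.HasEigenvalue ((T : E →ₗ[ℂ] E).restrict (hinv n)) μ :=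
      Module.End.hasEigenvalue_iff_mem_spectrum.mpr hμ
    obtain ⟨v, hv⟩ := hev.exists_hasEigenvector
    have hveq : ((T : E →ₗ[ℂ] E).restrict (hinv n)) v = μ • v :=
      Module.End.mem_eigenspace_iff.mp hv.1
    have hTv : T (v : E) = μ • (v : E) := by
      have := congrArg (Subtype.val) hveq
      simpa [LinearMap.restrict_apply] using this
    rw [spectrum.mem_iff]
    intro hunit
    obtain ⟨u, hu⟩ := hunit
    have happ : (algebraMap ℂ (E →L[ℂ] E) μ - T) (v : E) = 0 := by
      simp [Algebra.algebraMap_eq_smul_one, hTv]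
    have hv0 : (v : E) = 0 := by
      have h1 : (↑u⁻¹ * ↑u : E →L[ℂ] E) (v : E) = (v : E) := by
        rw [u.inv_mul]; rfl
      rw [hu] at h1
      rw [show (↑u⁻¹ * (algebraMap ℂ (E →L[ℂ] E) μ - T) : E →L[ℂ] E) (v : E)
          = (↑u⁻¹ : E →L[ℂ] E) ((algebraMap ℂ (E →L[ℂ] E) μ - T) (v : E)) from rfl,
        happ, map_zero] at h1
      exact h1.symm
    exact hv.2 (Submodule.coe_eq_zero.mp hv0)
end

section
/- Let n ≥ 1 and let A : ℝ → M_n(ℂ) be a continuous map such that A(t) is Hermitian for every t. If the map t ↦ σ(A(t)) is not constant (i.e. there exist s, t with σ(A(s)) ≠ σ(A(t))), then the set {t ∈ ℝ : some eigenvalue λ of A(t) is not an algebraic integer, i.e. λ is not integral over ℤ} is uncountable. -/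
open scoped Matrix

/-- The spectrum of a matrix `A ∈ M_n(ℂ)`, viewed as a subset of `ℝ` (for Hermitian `A`
this is the set of its real eigenvalues). -/
def realSpectrum {n : ℕ} (A : Matrix (Fin n) (Fin n) ℂ) : Set ℝ :=
  {x : ℝ | (x : ℂ) ∈ spectrum ℂ A}

/-- Evaluating the characteristic polynomial. -/
lemma charpoly_eval_aux {n : ℕ} (M : Matrix (Fin n) (Fin n) ℂ) (r : ℂ) :
    M.charpoly.eval r = (r • (1 : Matrix (Fin n) (Fin n) ℂ) - M).det := by
  rw [Matrix.charpoly, ← Polynomial.coe_evalRingHom, RingHom.map_det]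
  congr 1
  ext i j
  by_cases h : i = j <;>
    simp [Matrix.charmatrix_apply, Matrix.one_apply, h, Matrix.smul_apply, Matrix.sub_apply,
      Matrix.diagonal_apply]

/-- The set of algebraic integers in `ℂ` is countable. -/
lemma countable_integral_complex : Set.Countable {z : ℂ | IsIntegral ℤ z} :=
  (Algebraic.countable ℤ ℂ).mono fun _ hz => hz.isAlgebraic

/-- A continuous function on `ℝ` whose image is countable is constant. -/
lemma constant_of_countable_image {f : ℝ → ℂ} (hf : Continuous f)
    (h : Set.Countable (f '' Set.univ)) (a b : ℝ) : f a = f b := by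
  by_contra hab
  set g : ℝ → ℝ := fun u => ‖f u - f a‖ with hg
  have hgc : Continuous g := continuous_norm.comp (hf.sub continuous_const)
  have hga : g a = 0 := by simp [hg]
  have hgb : 0 < g b := by
    simp only [hg, norm_pos_iff, sub_ne_zero]
    exact fun h' => hab h'.symm
  have hsub : Set.Icc (0 : ℝ) (g b) ⊆ g '' Set.uIcc a b := by
    have := intermediate_value_uIcc (a := a) (b := b) (f := g) hgc.continuousOn
    intro y hy
    apply this
    rw [Set.uIcc_of_le (by rw [hga]; exact hgb.le), hga]
    exact hy
  have hcount : Set.Countable (g '' Set.uIcc a b) := by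
    have : g '' Set.uIcc a b ⊆ (fun z => ‖z - f a‖) '' (f '' Set.univ) := by
      intro y ⟨u, _, hu⟩
      exact ⟨f u, ⟨u, trivial, rfl⟩, hu⟩
    exact (h.image _).mono this
  have : Set.Countable (Set.Icc (0 : ℝ) (g b)) := hcount.mono hsub
  rw [← Cardinal.le_aleph0_iff_set_countable, Cardinal.mk_Icc_real hgb] at this
  exact absurd this (not_le.2 Cardinal.aleph0_lt_continuum)

/-- If `A : ℝ → M_n(ℂ)` is a continuous family of Hermitian matrices whose spectrum is
not constant, then uncountably many `t` admit an eigenvalue of `A t` which is not an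
algebraic integer (i.e. not integral over `ℤ`). -/
theorem uncountably_many_nonalgebraic_eigenvalues
    (n : ℕ) (hn : 1 ≤ n) (A : ℝ → Matrix (Fin n) (Fin n) ℂ)
    (hcont : Continuous A) (hherm : ∀ t, (A t).IsHermitian)
    (hnonconst : ∃ s t : ℝ, realSpectrum (A s) ≠ realSpectrum (A t)) :
    ¬ Set.Countable
      {t : ℝ | ∃ x : ℝ, (x : ℂ) ∈ spectrum ℂ (A t) ∧ ¬ IsIntegral ℤ x} := by
  intro hS
  set S := {t : ℝ | ∃ x : ℝ, (x : ℂ) ∈ spectrum ℂ (A t) ∧ ¬ IsIntegral ℤ x} with hSdef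
  -- For every integer m, the function t ↦ det(m•1 - A t) is constant.
  have key : ∀ m : ℤ, ∀ s t : ℝ,
      ((m : ℂ) • (1 : Matrix (Fin n) (Fin n) ℂ) - A s).det
        = ((m : ℂ) • (1 : Matrix (Fin n) (Fin n) ℂ) - A t).det := by
    intro m
    set f : ℝ → ℂ := fun t => ((m : ℂ) • (1 : Matrix (Fin n) (Fin n) ℂ) - A t).det with hf
    have hfc : Continuous f := Continuous.matrix_det (continuous_const.sub hcont)
    -- for t ∉ S, f t is an algebraic integer
    have hint : ∀ t : ℝ, t ∉ S → IsIntegral ℤ (f t) := by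
      intro t ht
      have hB : ((m : ℂ) • (1 : Matrix (Fin n) (Fin n) ℂ) - A t).IsHermitian := by
        have := hherm t
        unfold Matrix.IsHermitian at this ⊢
        rw [Matrix.conjTranspose_sub, Matrix.conjTranspose_smul, Matrix.conjTranspose_one, this]
        norm_num
      show IsIntegral ℤ (((m : ℂ) • (1 : Matrix (Fin n) (Fin n) ℂ) - A t).det)
      rw [hB.det_eq_prod_eigenvalues]
      apply IsIntegral.prod
      intro i _
      -- eigenvalue of m•1 - A t
      have hmem : hB.eigenvalues i ∈
          spectrum ℝ ((m : ℂ) • (1 : Matrix (Fin n) (Fin n) ℂ) - A t) :=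
        hB.eigenvalues_mem_spectrum_real i
      have hmemC : ((hB.eigenvalues i : ℝ) : ℂ) ∈
          spectrum ℂ ((m : ℂ) • (1 : Matrix (Fin n) (Fin n) ℂ) - A t) := by
        have := spectrum.algebraMap_mem (R := ℝ) (S := ℂ)
          (A := Matrix (Fin n) (Fin n) ℂ) hmem
        simpa using this
      obtain ⟨mu, hmu⟩ : ∃ mu : ℝ, mu = hB.eigenvalues i := ⟨_, rfl⟩
      rw [← hmu] at hmemC
      -- rewrite m•1 - A t as algebraMap ℂ _ m - A t
      have halg : (m : ℂ) • (1 : Matrix (Fin n) (Fin n) ℂ) - A t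
          = algebraMap ℂ (Matrix (Fin n) (Fin n) ℂ) (m : ℂ) - A t := by
        rw [Algebra.algebraMap_eq_smul_one]
      rw [halg, ← spectrum.singleton_sub_eq] at hmemC
      obtain ⟨z, hz, w, hw, hzw⟩ := hmemC
      rw [Set.mem_singleton_iff] at hz
      subst hz
      -- w ∈ spectrum ℂ (A t), and w = m - eigenvalue, a real number
      have hwre : w = (((m : ℝ) - mu : ℝ) : ℂ) := by
        push_cast
        have : w = (m : ℂ) - (mu : ℂ) := by
          rw [← hzw]; ring
        rw [this]
      rw [hwre] at hw
      have hwint : IsIntegral ℤ ((m : ℝ) - mu) := by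
        by_contra hcon
        exact ht ⟨(m : ℝ) - mu, hw, hcon⟩
      -- eigenvalue = m - (m - eigenvalue) is integral (over ℝ), transfer to ℂ
      have hei : IsIntegral ℤ mu := by
        have : mu = (m : ℝ) - ((m : ℝ) - mu) := by ring
        rw [this]
        exact (isIntegral_algebraMap (x := m) (A := ℝ)).sub hwint
      have : IsIntegral ℤ ((mu : ℝ) : ℂ) := by
        obtain ⟨p, hpm, hpe⟩ := hei
        refine ⟨p, hpm, ?_⟩
        have h2 := congrArg Complex.ofRealHom hpe
        rw [Polynomial.hom_eval₂, map_zero] at h2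
        rwa [Subsingleton.elim (algebraMap ℤ ℂ) (Complex.ofRealHom.comp (algebraMap ℤ ℝ))]
      rw [hmu] at this
      simpa using this
    -- image of f is countable
    intro s t
    apply constant_of_countable_image hfc
    have himg : f '' Set.univ ⊆ f '' S ∪ {z : ℂ | IsIntegral ℤ z} := by
      rintro y ⟨u, -, rfl⟩
      by_cases hu : u ∈ S
      · exact Or.inl ⟨u, hu, rfl⟩
      · exact Or.inr (hint u hu)
    exact ((hS.image f).union countable_integral_complex).mono himg
  -- hence charpolys are all equal
  have hcp : ∀ s t : ℝ, (A s).charpoly = (A t).charpoly := by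
    intro s t
    apply Polynomial.eq_of_infinite_eval_eq
    have hsub : Set.range ((↑) : ℤ → ℂ) ⊆
        {x | Polynomial.eval x (A s).charpoly = Polynomial.eval x (A t).charpoly} := by
      rintro x ⟨m, rfl⟩
      simp only [Set.mem_setOf_eq, charpoly_eval_aux]
      exact key m s t
    exact Set.Infinite.mono hsub (Set.infinite_range_of_injective Int.cast_injective)
  -- hence spectra are equal
  obtain ⟨s, t, hst⟩ := hnonconst
  apply hst
  ext x
  have hiff : ∀ u : ℝ, ((x : ℂ) ∈ spectrum ℂ (A u) ↔
      Polynomial.eval (x : ℂ) (A u).charpoly = 0) := by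
    intro u
    have h1 : algebraMap ℂ (Matrix (Fin n) (Fin n) ℂ) (x : ℂ)
        = (x : ℂ) • (1 : Matrix (Fin n) (Fin n) ℂ) := Algebra.algebraMap_eq_smul_one _
    rw [spectrum.mem_iff, h1, Matrix.isUnit_iff_isUnit_det, isUnit_iff_ne_zero, not_ne_iff,
      charpoly_eval_aux]
  simp only [realSpectrum, Set.mem_setOf_eq, hiff, hcp s t]
end

section
/- Let q be a prime power with q ≡ 1 (mod 4), let 𝔽_q be the finite field with q elements, and let χ : 𝔽_q → ℤ be the quadratic character (χ(0) = 0, χ(x) = 1 if x is a nonzero square, χ(x) = −1 otherwise). Let C be the (q+1)×(q+1) matrix indexed by {∞} ∪ 𝔽_q with C_{∞,∞} = 0, C_{∞,b} = C_{a,∞} = 1 for a, b ∈ 𝔽_q, and C_{a,b} = χ(a − b) for a, b ∈ 𝔽_q. Let H₊ = [[1,1],[1,−1]] and H₋ = [[1,−1],[−1,−1]]. Then the Paley type II matrix H = C ⊗ H₊ + I_{q+1} ⊗ H₋ (Kronecker product), of size 2(q+1), is a real Hadamard matrix: every entry of H is 1 or −1, and H·Hᵀ = 2(q+1)·I. -/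
open scoped Matrix Kronecker

/-- The `(q+1) × (q+1)` Paley conference-type matrix, indexed by `{∞} ∪ 𝔽_q`
(here `none = ∞`): `C_{∞,∞} = 0`, `C_{∞,b} = C_{a,∞} = 1`, `C_{a,b} = χ(a−b)`. -/
def paleyC (F : Type*) [Field F] [Fintype F] [DecidableEq F] :
    Matrix (Option F) (Option F) ℤ :=
  Matrix.of fun a b =>
    match a, b with
    | none, none => 0
    | none, some _ => 1
    | some _, none => 1
    | some a, some b => (quadraticChar F (a - b) : ℤ)

/-- The Paley type II matrix `H = C ⊗ H₊ + I ⊗ H₋` of size `2(q+1)`. -/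
def paleyII (F : Type*) [Field F] [Fintype F] [DecidableEq F] :
    Matrix (Option F × Fin 2) (Option F × Fin 2) ℤ :=
  paleyC F ⊗ₖ !![1, 1; 1, -1] + (1 : Matrix (Option F) (Option F) ℤ) ⊗ₖ !![1, -1; -1, -1]

section Aux

variable {F : Type*} [Field F] [Fintype F] [DecidableEq F]

lemma aux_ringChar_ne_two (hq : Fintype.card F % 4 = 1) : ringChar F ≠ 2 := by
  intro h
  have h2 := FiniteField.even_card_iff_char_two.mp h
  omega

lemma aux_chi_neg_one (hq : Fintype.card F % 4 = 1) : quadraticChar F (-1) = 1 :=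
  (quadraticChar_one_iff_isSquare (neg_ne_zero.mpr one_ne_zero)).mpr
    (FiniteField.isSquare_neg_one_iff.mpr (by omega))

lemma aux_chi_symm (hq : Fintype.card F % 4 = 1) (a b : F) :
    quadraticChar F (a - b) = quadraticChar F (b - a) := by
  have h : b - a = -1 * (a - b) := by ring
  rw [h, map_mul, aux_chi_neg_one hq, one_mul]

lemma aux_key_sum (hq : Fintype.card F % 4 = 1) {a b : F} (hab : a ≠ b) :
    ∑ c : F, quadraticChar F (a - c) * quadraticChar F (b - c) = -1 := by
  have hF := aux_ringChar_ne_two hq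
  have hstep : ∀ c : F, quadraticChar F (a - c) * quadraticChar F (b - c)
      = quadraticChar F ((a - c) * (b - c)) := fun c => (map_mul _ _ _).symm
  simp_rw [hstep]
  rw [← Finset.add_sum_erase _ _ (Finset.mem_univ a)]
  rw [show (a - a) * (b - a) = 0 by ring, quadraticChar_zero, zero_add]
  rw [Finset.sum_nbij' (i := fun c => (b - c) * (a - c)⁻¹)
    (j := fun t => (b - a * t) * (1 - t)⁻¹) (t := Finset.univ.erase 1)
    (g := fun t => (quadraticChar F t : ℤ)) ?_ ?_ ?_ ?_ ?_]
  · rw [Finset.sum_erase_eq_sub (Finset.mem_univ 1), quadraticChar_sum_zero hF, map_one]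
    ring
  · intro c hc
    have hac : a - c ≠ 0 := sub_ne_zero.mpr (Ne.symm (Finset.ne_of_mem_erase hc))
    simp only [Finset.mem_erase, Finset.mem_univ, and_true]
    intro h
    rw [mul_inv_eq_one₀ hac] at h
    exact hab (by linear_combination -h)
  · intro t ht
    have ht1 : (1 : F) - t ≠ 0 := sub_ne_zero.mpr (Ne.symm (Finset.ne_of_mem_erase ht))
    simp only [Finset.mem_erase, Finset.mem_univ, and_true]
    intro h
    apply hab
    field_simp at h
    linear_combination -h
  · intro c hc
    have hac : a - c ≠ 0 := sub_ne_zero.mpr (Ne.symm (Finset.ne_of_mem_erase hc))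
    have hba : -b + a ≠ 0 := by
      intro h; exact hab (by linear_combination h)
    have h1 : (1 : F) - (b - c) * (a - c)⁻¹ ≠ 0 := by
      rw [sub_ne_zero]
      intro h
      rw [eq_comm, mul_inv_eq_one₀ hac] at h
      exact hab (by linear_combination -h)
    field_simp
    rw [div_eq_iff (show a - c - (b - c) ≠ 0 from fun h => hab (by linear_combination h))]
    ring
  · intro t ht
    have ht1 : (1 : F) - t ≠ 0 := sub_ne_zero.mpr (Ne.symm (Finset.ne_of_mem_erase ht))
    have hba : -b + a ≠ 0 := by
      intro h; exact hab (by linear_combination h)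
    have h2 : a - (b - a * t) * (1 - t)⁻¹ ≠ 0 := by
      intro h
      apply hab
      rw [sub_eq_zero] at h
      field_simp at h
      linear_combination h
    field_simp
    rw [div_eq_iff (show a * (1 - t) - (b - a * t) ≠ 0 from
      fun h => hab (by linear_combination h))]
    ring
  · intro c hc
    have hac : a - c ≠ 0 := sub_ne_zero.mpr (Ne.symm (Finset.ne_of_mem_erase hc))
    rw [show (a - c) * (b - c) = (a - c) ^ 2 * ((b - c) * (a - c)⁻¹) by field_simp,
      map_mul, quadraticChar_sq_one' hac, one_mul]

lemma aux_paleyC_transpose (hq : Fintype.card F % 4 = 1) : (paleyC F)ᵀ = paleyC F := by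
  ext a b
  cases a <;> cases b <;>
    simp only [Matrix.transpose_apply, paleyC, Matrix.of_apply]
  exact aux_chi_symm hq _ _

lemma aux_paleyC_mul_self (hq : Fintype.card F % 4 = 1) :
    paleyC F * paleyC F = (Fintype.card F : ℤ) • 1 := by
  have hF := aux_ringChar_ne_two hq
  ext a b
  rw [Matrix.mul_apply, Fintype.sum_option]
  rcases a with _ | a <;> rcases b with _ | b
  · simp [paleyC, Matrix.one_apply]
  · -- none, some
    have h0 : ∑ x : F, quadraticCharFun F (x - b) = 0 :=
      calc ∑ x : F, quadraticCharFun F (x - b) = ∑ x : F, quadraticChar F (x - b) := rfl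
        _ = ∑ x : F, quadraticChar F x := Fintype.sum_equiv (Equiv.subRight b) _ _ fun c => rfl
        _ = 0 := quadraticChar_sum_zero hF
    simp [paleyC, Matrix.one_apply, h0]
  · -- some, none
    have h0 : ∑ x : F, quadraticCharFun F (a - x) = 0 :=
      calc ∑ x : F, quadraticCharFun F (a - x) = ∑ x : F, quadraticChar F (a - x) := rfl
        _ = ∑ x : F, quadraticChar F x := Fintype.sum_equiv (Equiv.subLeft a) _ _ fun c => rfl
        _ = 0 := quadraticChar_sum_zero hF
    simp [paleyC, Matrix.one_apply, h0]
  · -- some, some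
    simp only [paleyC, Matrix.of_apply, Matrix.smul_apply, Matrix.one_apply, one_mul,
      smul_eq_mul]
    have hsymm : ∀ c : F, (quadraticChar F (a - c) : ℤ) * quadraticChar F (c - b)
        = quadraticChar F (a - c) * quadraticChar F (b - c) := fun c => by
      rw [aux_chi_symm hq c b]
    rw [Finset.sum_congr rfl (fun c _ => hsymm c)]
    by_cases hab : a = b
    · subst hab
      have : ∀ c : F, (quadraticChar F (a - c) : ℤ) * quadraticChar F (a - c)
          = if c = a then 0 else 1 := by
        intro c
        split
        · simp [*, sub_self]
        · have : a - c ≠ 0 := sub_ne_zero.mpr (Ne.symm ‹c ≠ a›)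
          rw [← sq, ← map_pow, quadraticChar_sq_one' this]
      have hsum : ∑ c : F, (if c = a then (0:ℤ) else 1) = (Fintype.card F : ℤ) - 1 := by
        have h1 : ∀ c : F, (if c = a then (0:ℤ) else 1) = 1 - (if c = a then 1 else 0) := by
          intro c; split <;> ring
        rw [Finset.sum_congr rfl fun c _ => h1 c, Finset.sum_sub_distrib,
          Finset.sum_const, Finset.sum_ite_eq' Finset.univ a fun _ => (1:ℤ)]
        simp [Finset.card_univ]
      rw [Finset.sum_congr rfl (fun c _ => this c), hsum]
      simp
    · rw [aux_key_sum hq hab]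
      simp [Option.some_inj, hab]

end Aux

set_option maxHeartbeats 1000000 in
/-- For a prime power `q ≡ 1 (mod 4)` (realized as the cardinality of a finite field
`F`), the Paley type II matrix of size `2(q+1)` is a real Hadamard matrix: every entry
is `1` or `−1` and `H Hᵀ = 2(q+1)·I`. -/
theorem paleyII_isHadamard (F : Type*) [Field F] [Fintype F] [DecidableEq F]
    (hq : Fintype.card F % 4 = 1) :
    (∀ i j, paleyII F i j = 1 ∨ paleyII F i j = -1) ∧
    paleyII F * (paleyII F)ᵀ =
      (2 * (Fintype.card F + 1) : ℤ) •
        (1 : Matrix (Option F × Fin 2) (Option F × Fin 2) ℤ) := by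
  have hF := aux_ringChar_ne_two (F := F) hq
  constructor
  · rintro ⟨a, i⟩ ⟨b, j⟩
    simp only [paleyII, Matrix.add_apply, Matrix.kroneckerMap_apply, Matrix.one_apply]
    by_cases hab : a = b
    · subst hab
      have hC : paleyC F a a = 0 := by
        cases a <;> simp [paleyC, sub_self]
      rw [hC, if_pos rfl, zero_mul, zero_add, one_mul]
      fin_cases i <;> fin_cases j <;> simp
    · have hC : paleyC F a b = 1 ∨ paleyC F a b = -1 := by
        rcases a with _ | a <;> rcases b with _ | b
        · exact absurd rfl hab
        · left; rfl
        · left; rfl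
        · exact quadraticChar_dichotomy
            (sub_ne_zero.mpr fun h => hab (by rw [h]))
      rw [if_neg hab, zero_mul, add_zero]
      rcases hC with h | h <;> rw [h] <;> fin_cases i <;> fin_cases j <;> simp
  · have hCt := aux_paleyC_transpose (F := F) hq
    have hCC := aux_paleyC_mul_self (F := F) hq
    have e1 : (!![1, 1; 1, -1] : Matrix (Fin 2) (Fin 2) ℤ) * !![1, 1; 1, -1]ᵀ
        = (2 : ℤ) • 1 := by
      decide
    have e2 : (!![1, -1; -1, -1] : Matrix (Fin 2) (Fin 2) ℤ) * !![1, -1; -1, -1]ᵀ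
        = (2 : ℤ) • 1 := by
      decide
    have e3 : (!![1, 1; 1, -1] : Matrix (Fin 2) (Fin 2) ℤ) * !![1, -1; -1, -1]ᵀ
        + !![1, -1; -1, -1] * !![1, 1; 1, -1]ᵀ = 0 := by
      decide
    have expand : paleyII F * (paleyII F)ᵀ =
        (paleyC F * paleyC F) ⊗ₖ (!![1, 1; 1, -1] * !![1, 1; 1, -1]ᵀ)
        + paleyC F ⊗ₖ (!![1, 1; 1, -1] * !![1, -1; -1, -1]ᵀ
            + !![1, -1; -1, -1] * !![1, 1; 1, -1]ᵀ)
        + (1 : Matrix (Option F) (Option F) ℤ)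
            ⊗ₖ (!![1, -1; -1, -1] * !![1, -1; -1, -1]ᵀ) := by
      rw [paleyII, Matrix.transpose_add, ← Matrix.kroneckerMap_transpose,
        ← Matrix.kroneckerMap_transpose, Matrix.transpose_one, hCt, add_mul, mul_add,
        mul_add, ← Matrix.mul_kronecker_mul, ← Matrix.mul_kronecker_mul,
        ← Matrix.mul_kronecker_mul, ← Matrix.mul_kronecker_mul, Matrix.one_mul, Matrix.one_mul,
        Matrix.mul_one, Matrix.kronecker_add]
      abel1
    rw [expand, hCC, e1, e2, e3, Matrix.kronecker_zero, add_zero,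
      Matrix.smul_kronecker, Matrix.kronecker_smul,
      Matrix.one_kronecker_one, smul_smul, ← add_smul]
    congr 1
    ring
end
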